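/- arXiv:1507.06755 — 4 statements merged into one kernel-verified Lean document; each statement's English description precedes it below -/
import Mathlib

section
/- If λ ∈ Γ_m (i.e. S_1(λ) > 0, …, S_m(λ) > 0 for the elementary symmetric polynomials S_k in n variables), then for every k with k + t ≤ m and every subset {i_1,…,i_t} ⊆ {1,…,n}, the restricted symmetric function S_{k;i_1…i_t}(λ) := S_k(λ)|_{λ_{i_1}=⋯=λ_{i_t}=0} is positive. -/
open Finset

/-- The k-th elementary symmetric polynomial of n real variables. -/
noncomputable def S (n : ℕ) (k : ℕ) (lam : Fin n → ℝ) : ℝ :=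
  ∑ A ∈ Finset.powersetCard k (Finset.univ : Finset (Fin n)), ∏ i ∈ A, lam i

/-- The Gårding cone Γ_m. -/
def GammaCone (n m : ℕ) : Set (Fin n → ℝ) :=
  {lam | ∀ k, 1 ≤ k → k ≤ m → 0 < S n k lam}

/-- Restricted elementary symmetric polynomial: the k-th elementary symmetric
polynomial of the variables with indices in T. -/
noncomputable def SRes (n : ℕ) (T : Finset (Fin n)) (k : ℕ) (lam : Fin n → ℝ) : ℝ :=
  ∑ A ∈ Finset.powersetCard k T, ∏ i ∈ A, lam i

open Polynomial

/-- Part 1: the log-concavity inequality q q'' ≤ (q')² for products of linear factors. -/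
lemma prod_deriv_sq (s : Multiset ℝ) (x : ℝ) :
    eval x (Multiset.map (fun r => X - C r) s).prod *
      eval x (derivative (derivative (Multiset.map (fun r => X - C r) s).prod)) ≤
    (eval x (derivative (Multiset.map (fun r => X - C r) s).prod)) ^ 2 := by
  induction s using Multiset.induction_on with
  | empty => simp
  | cons r s ih =>
    rw [Multiset.map_cons, Multiset.prod_cons, derivative_mul, derivative_X_sub_C, one_mul,
      derivative_add, derivative_mul, derivative_X_sub_C, one_mul]
    simp only [eval_add, eval_mul, eval_sub, eval_X, eval_C]
    set H := eval x (Multiset.map (fun r => X - C r) s).prod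
    set H1 := eval x (derivative (Multiset.map (fun r => X - C r) s).prod)
    set H2 := eval x (derivative (derivative (Multiset.map (fun r => X - C r) s).prod))
    nlinarith [sq_nonneg H, sq_nonneg (x - r), mul_nonneg (sq_nonneg (x - r)) (sub_nonneg.mpr ih)]

lemma prod_deriv_sq_strict (s : Multiset ℝ) (hs : s ≠ 0) (x : ℝ)
    (hx : eval x (Multiset.map (fun r => X - C r) s).prod ≠ 0) :
    eval x (Multiset.map (fun r => X - C r) s).prod *
      eval x (derivative (derivative (Multiset.map (fun r => X - C r) s).prod)) <
    (eval x (derivative (Multiset.map (fun r => X - C r) s).prod)) ^ 2 := by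
  obtain ⟨r, hr⟩ := Multiset.exists_mem_of_ne_zero hs
  obtain ⟨s', rfl⟩ : ∃ s', s = r ::ₘ s' := ⟨s.erase r, (Multiset.cons_erase hr).symm⟩
  rw [Multiset.map_cons, Multiset.prod_cons] at hx ⊢
  rw [derivative_mul, derivative_X_sub_C, one_mul,
    derivative_add, derivative_mul, derivative_X_sub_C, one_mul]
  simp only [eval_add, eval_mul, eval_sub, eval_X, eval_C] at hx ⊢
  set H := eval x (Multiset.map (fun r => X - C r) s').prod
  set H1 := eval x (derivative (Multiset.map (fun r => X - C r) s').prod)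
  set H2 := eval x (derivative (derivative (Multiset.map (fun r => X - C r) s').prod))
  have hH : H ≠ 0 := fun h => hx (by rw [h, mul_zero])
  have hH2 : 0 < H ^ 2 := by positivity
  nlinarith [prod_deriv_sq s' x, sq_nonneg (x - r),
    mul_nonneg (sq_nonneg (x - r)) (sub_nonneg.mpr (prod_deriv_sq s' x))]

/-- For a real-rooted polynomial q and a point where q ≠ 0, we have q q'' < (q')². -/
lemma rooted_deriv_sq_strict (q : ℝ[X]) (hq : Multiset.card q.roots = q.natDegree)
    (hd : 1 ≤ q.natDegree) (x : ℝ) (hx : eval x q ≠ 0) :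
    eval x q * eval x (derivative (derivative q)) < (eval x (derivative q)) ^ 2 := by
  have hq0 : q ≠ 0 := fun h => by simp [h] at hd
  have hsp : Splits q := splits_iff_card_roots.mpr hq
  have hfac := hsp.eq_prod_roots
  have hroots_ne : q.roots ≠ 0 := by
    intro h; rw [h] at hq; simp at hq; omega
  have ha : q.leadingCoeff ≠ 0 := leadingCoeff_ne_zero.mpr hq0
  have hWx : eval x (Multiset.map (fun a => X - C a) q.roots).prod ≠ 0 := by
    intro h
    apply hx
    rw [hfac, eval_mul, h, mul_zero]
  have key := prod_deriv_sq_strict q.roots hroots_ne x hWx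
  have ha2 : (0:ℝ) < q.leadingCoeff ^ 2 := by positivity
  calc eval x q * eval x (derivative (derivative q))
      = q.leadingCoeff ^ 2 * (eval x (Multiset.map (fun a => X - C a) q.roots).prod *
          eval x (derivative (derivative (Multiset.map (fun a => X - C a) q.roots).prod))) := by
        conv_lhs => rw [hfac]
        rw [derivative_C_mul, derivative_C_mul]
        simp only [eval_mul, eval_C]; ring
    _ < q.leadingCoeff ^ 2 * (eval x (derivative (Multiset.map (fun a => X - C a) q.roots).prod)) ^ 2 :=
        by exact mul_lt_mul_of_pos_left key ha2
    _ = (eval x (derivative q)) ^ 2 := by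
        conv_rhs => rw [hfac]
        rw [derivative_C_mul]
        simp only [eval_mul, eval_C]; ring

lemma iterate_deriv_card (p : ℝ[X]) (hp : Multiset.card p.roots = p.natDegree) :
    ∀ j, j ≤ p.natDegree →
      Multiset.card (derivative^[j] p).roots = p.natDegree - j ∧
        (derivative^[j] p).natDegree = p.natDegree - j := by
  intro j
  induction j with
  | zero => intro _; simpa using hp
  | succ j ih =>
    intro hj
    obtain ⟨hcard, hdeg⟩ := ih (by omega)
    rw [Function.iterate_succ_apply']
    set q := derivative^[j] p with hqdef
    have h1 : Multiset.card q.roots ≤ Multiset.card (derivative q).roots + 1 :=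
      card_roots_le_derivative q
    have h2 : Multiset.card (derivative q).roots ≤ (derivative q).natDegree :=
      card_roots' _
    have h3 : (derivative q).natDegree ≤ q.natDegree - 1 := natDegree_derivative_le q
    constructor <;> omega

lemma SRes_zero (n : ℕ) (T : Finset (Fin n)) (lam : Fin n → ℝ) : SRes n T 0 lam = 1 := by
  simp [SRes]

lemma SRes_eq_zero (n : ℕ) (T : Finset (Fin n)) (k : ℕ) (hk : T.card < k) (lam : Fin n → ℝ) :
    SRes n T k lam = 0 := by
  rw [SRes, Finset.powersetCard_eq_empty.mpr hk, Finset.sum_empty]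

lemma newton_zero {n : ℕ} (T : Finset (Fin n)) (ν : Fin n → ℝ) (k : ℕ) (hk : 1 ≤ k)
    (hkN : k + 1 ≤ T.card)
    (h0 : SRes n T k ν = 0) (hmm : 0 < SRes n T (k - 1) ν) (hpp : 0 < SRes n T (k + 1) ν) :
    False := by
  set N := T.card with hN
  set P : ℝ[X] := ∏ i ∈ T, (X + C (ν i)) with hP
  have hPmonic : P.Monic := monic_prod_of_monic _ _ fun i _ => monic_X_add_C _
  have hPdeg : P.natDegree = N := by
    rw [hP, natDegree_prod _ _ fun i _ => (monic_X_add_C (ν i)).ne_zero]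
    simp [natDegree_X_add_C, hN]
  have hcoeff : ∀ j ≤ N, P.coeff (N - j) = SRes n T j ν := by
    intro j hj
    rw [hP, Finset.prod_X_add_C_coeff T ν (by omega)]
    have : #T - (N - j) = j := by omega
    rw [this, SRes]
  have hPsplits : Splits P :=
    Splits.prod fun i _ => Splits.of_natDegree_le_one (le_of_eq (natDegree_X_add_C _))
  have hProots : Multiset.card P.roots = P.natDegree :=
    (splits_iff_card_roots.mp hPsplits)
  -- evaluation of iterated derivatives at 0
  have heval : ∀ j ≤ N, eval 0 (derivative^[j] P)
      = ((j.descFactorial j : ℕ) : ℝ) * SRes n T (N - j) ν := by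
    intro j hj
    rw [← coeff_zero_eq_eval_zero, coeff_iterate_derivative, zero_add, nsmul_eq_mul]
    congr 1
    have h2 := hcoeff (N - j) (by omega)
    rwa [Nat.sub_sub_self hj] at h2
  set q := derivative^[N - (k + 1)] P with hq
  obtain ⟨hqcard, hqdeg⟩ := iterate_deriv_card P hProots (N - (k + 1)) (by omega)
  rw [hPdeg] at hqcard hqdeg
  have hqdeg' : q.natDegree = k + 1 := by rw [hq, hqdeg]; omega
  have hqcard' : Multiset.card q.roots = k + 1 := by rw [hq, hqcard]; omega
  have hd1 : derivative q = derivative^[N - k] P := by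
    have h3 : N - k = (N - (k + 1)) + 1 := by omega
    rw [hq, h3, Function.iterate_succ_apply']
  have hd2 : derivative (derivative q) = derivative^[N - k + 1] P := by
    rw [hd1, Function.iterate_succ_apply']
  have e0 : eval 0 q = (((N - (k+1)).descFactorial (N - (k+1)) : ℕ) : ℝ) * SRes n T (k + 1) ν := by
    rw [hq, heval _ (by omega)]
    congr 2
    omega
  have e1 : eval 0 (derivative q) = 0 := by
    rw [hd1, heval _ (by omega)]
    have : N - (N - k) = k := by omega
    rw [this, h0, mul_zero]
  have e2 : eval 0 (derivative (derivative q))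
      = (((N - k + 1).descFactorial (N - k + 1) : ℕ) : ℝ) * SRes n T (k - 1) ν := by
    rw [hd2, heval _ (by omega)]
    congr 2
    omega
  have c0pos : (0:ℝ) < (((N - (k+1)).descFactorial (N - (k+1)) : ℕ) : ℝ) := by
    rw [Nat.descFactorial_self]
    exact_mod_cast Nat.factorial_pos _
  have c2pos : (0:ℝ) < (((N - k + 1).descFactorial (N - k + 1) : ℕ) : ℝ) := by
    rw [Nat.descFactorial_self]
    exact_mod_cast Nat.factorial_pos _
  have p1 : 0 < eval 0 q := e0 ▸ mul_pos c0pos hpp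
  have p2 : 0 < eval 0 (derivative (derivative q)) := e2 ▸ mul_pos c2pos hmm
  have key := rooted_deriv_sq_strict q (hqcard'.trans hqdeg'.symm) (by omega) 0 (ne_of_gt p1)
  rw [e1] at key
  nlinarith [mul_pos p1 p2]



/-- The basic recursion: splitting off the variable `i`. -/
lemma SRes_erase_rec {n : ℕ} (T : Finset (Fin n)) (i : Fin n) (hi : i ∈ T) (k : ℕ)
    (lam : Fin n → ℝ) :
    SRes n T (k + 1) lam
      = SRes n (T.erase i) (k + 1) lam + lam i * SRes n (T.erase i) k lam := by
  have hinot : i ∉ T.erase i := Finset.notMem_erase i T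
  conv_lhs => rw [SRes, ← Finset.insert_erase hi, Finset.powersetCard_succ_insert hinot]
  rw [Finset.sum_union]
  · congr 1
    have hinj : ∀ A ∈ powersetCard k (T.erase i), ∀ B ∈ powersetCard k (T.erase i),
        insert i A = insert i B → A = B := by
      intro A hA B hB hAB
      have hiA : i ∉ A := fun h => hinot ((Finset.mem_powersetCard.mp hA).1 h)
      have hiB : i ∉ B := fun h => hinot ((Finset.mem_powersetCard.mp hB).1 h)
      rw [← Finset.erase_insert hiA, ← Finset.erase_insert hiB, hAB]
    rw [Finset.sum_image hinj, SRes, Finset.mul_sum]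
    apply Finset.sum_congr rfl
    intro A hA
    have hiA : i ∉ A := fun h => hinot ((Finset.mem_powersetCard.mp hA).1 h)
    rw [Finset.prod_insert hiA]
  · rw [Finset.disjoint_left]
    intro A hA hA'
    obtain ⟨B, hB, rfl⟩ := Finset.mem_image.mp hA'
    exact hinot ((Finset.mem_powersetCard.mp hA).1 (Finset.mem_insert_self i B))

/-- SRes over T does not depend on values outside T. -/
lemma SRes_update {n : ℕ} (T : Finset (Fin n)) (i : Fin n) (hi : i ∉ T) (k : ℕ)
    (lam : Fin n → ℝ) (t : ℝ) :
    SRes n T k (Function.update lam i t) = SRes n T k lam := by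
  apply Finset.sum_congr rfl
  intro A hA
  apply Finset.prod_congr rfl
  intro j hj
  have : j ≠ i := fun h => hi (h ▸ (Finset.mem_powersetCard.mp hA).1 hj)
  exact Function.update_of_ne this _ _

/-- The single-index removal lemma. -/
lemma erase_pos {n : ℕ} (T : Finset (Fin n)) (m : ℕ) (lam : Fin n → ℝ)
    (h : ∀ j, j ≤ m → 0 < SRes n T j lam) (i : Fin n) (hi : i ∈ T) :
    ∀ k, k + 1 ≤ m → 0 < SRes n (T.erase i) k lam := by
  intro k
  induction k using Nat.strong_induction_on with
  | _ k IH =>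
    intro hkm
    rcases k with _ | k'
    · rw [SRes_zero]; norm_num
    by_contra hneg
    push_neg at hneg
    have hμk' : 0 < SRes n (T.erase i) k' lam := IH k' (by omega) (by omega)
    set μk := SRes n (T.erase i) (k' + 1) lam with hμk
    set t₀ : ℝ := -μk / SRes n (T.erase i) k' lam with ht₀
    have ht₀0 : 0 ≤ t₀ := div_nonneg (by linarith) hμk'.le
    have ht₀mul : t₀ * SRes n (T.erase i) k' lam = -μk := div_mul_cancel₀ _ (ne_of_gt hμk')
    have hrec := SRes_erase_rec T i hi k' lam
    have hTk : 0 < SRes n T (k' + 1) lam := h (k' + 1) (by omega)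
    have hlt : t₀ < lam i := by
      have h1 : t₀ * SRes n (T.erase i) k' lam < lam i * SRes n (T.erase i) k' lam := by
        rw [ht₀mul]; linarith [hrec ▸ hTk]
      exact lt_of_mul_lt_mul_right h1 hμk'.le
    set ν := Function.update lam i t₀ with hν
    have hνi : ν i = t₀ := Function.update_self i t₀ lam
    have hupd : ∀ j, SRes n (T.erase i) j ν = SRes n (T.erase i) j lam := fun j =>
      SRes_update (T.erase i) i (Finset.notMem_erase i T) j lam t₀
    -- S_{k}(ν) = 0
    have hsk : SRes n T (k' + 1) ν = 0 := by
      rw [SRes_erase_rec T i hi k' ν, hupd, hupd, hνi]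
      rw [← hμk] at *
      linarith [ht₀mul]
    -- S_{k-1}(ν) > 0
    have hskm : 0 < SRes n T k' ν := by
      rcases k' with _ | k''
      · rw [SRes_zero]; norm_num
      · rw [SRes_erase_rec T i hi k'' ν, hupd, hupd, hνi]
        have h1 : 0 < SRes n (T.erase i) (k'' + 1) lam := IH (k'' + 1) (by omega) (by omega)
        have h2 : 0 < SRes n (T.erase i) k'' lam := IH k'' (by omega) (by omega)
        nlinarith
    -- S_{k+1}(ν) > 0
    have hskp : 0 < SRes n T (k' + 2) ν := by
      rw [show k' + 2 = (k' + 1) + 1 from rfl, SRes_erase_rec T i hi (k' + 1) ν, hupd, hupd, hνi]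
      have hTk2 : 0 < SRes n T (k' + 2) lam := h (k' + 2) (by omega)
      rw [show k' + 2 = (k' + 1) + 1 from rfl, SRes_erase_rec T i hi (k' + 1) lam] at hTk2
      rw [← hμk] at *
      nlinarith
    by_cases hcard : k' + 2 ≤ T.card
    · exact newton_zero T ν (k' + 1) (by omega) (by omega) hsk (by simpa using hskm)
        (by simpa using hskp)
    · rw [SRes_eq_zero n T (k' + 2) (by omega) ν] at hskp
      linarith

theorem stmt0 (n m : ℕ) (hm : 1 ≤ m) (hmn : m ≤ n) (lam : Fin n → ℝ)
    (hlam : lam ∈ GammaCone n m) (I : Finset (Fin n)) (k : ℕ)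
    (hk : k + I.card ≤ m) :
    0 < SRes n (Finset.univ \ I) k lam := by
  have key : ∀ (I : Finset (Fin n)) (k : ℕ), k + I.card ≤ m →
      0 < SRes n (Finset.univ \ I) k lam := by
    intro I
    induction I using Finset.induction_on with
    | empty =>
      intro k hk
      simp only [Finset.card_empty, add_zero] at hk
      rw [Finset.sdiff_empty]
      rcases Nat.eq_zero_or_pos k with rfl | hk0
      · rw [SRes_zero]; norm_num
      · exact hlam k hk0 hk
    | @insert a I' ha IH =>
      intro k hk
      rw [Finset.card_insert_of_notMem ha] at hk
      have hsd : (Finset.univ : Finset (Fin n)) \ insert a I' = (Finset.univ \ I').erase a := by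
        ext x
        simp only [Finset.mem_sdiff, Finset.mem_erase, Finset.mem_insert, Finset.mem_univ,
          true_and]
        tauto
      rw [hsd]
      refine erase_pos (Finset.univ \ I') (m - I'.card) lam ?_ a ?_ k (by omega)
      · intro j hj
        exact IH j (by omega)
      · simp [Finset.mem_sdiff, ha]
  exact key I k hk
end

section
/- If λ ∈ Γ_m with coordinates ordered decreasingly λ_1 ≥ λ_2 ≥ ⋯ ≥ λ_n, then S_{m-1}(λ) ≥ λ_1 λ_2 ⋯ λ_{m-1}. -/
open Finset

section Aux
open Multiset Polynomial

lemma esymm0 (s : Multiset ℝ) : s.esymm 0 = 1 := by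
  simp [Multiset.esymm]

lemma esymm_cons (a : ℝ) (s : Multiset ℝ) (k : ℕ) :
    (a ::ₘ s).esymm (k + 1) = s.esymm (k + 1) + a * s.esymm k := by
  simp only [Multiset.esymm, powersetCard_cons, Multiset.map_add, Multiset.sum_add,
    Multiset.map_map]
  congr 1
  rw [← Multiset.sum_map_mul_left]
  congr 1
  apply Multiset.map_congr rfl
  intro t _
  simp

lemma esymm_eq_zero (s : Multiset ℝ) (k : ℕ) (h : Multiset.card s < k) : s.esymm k = 0 := by
  simp [Multiset.esymm, Multiset.powersetCard_eq_empty _ h]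

lemma esymm_card (s : Multiset ℝ) : s.esymm (Multiset.card s) = s.prod := by
  induction s using Multiset.induction with
  | empty => simp [esymm0]
  | cons a s ih =>
    rw [Multiset.card_cons, esymm_cons, ih, esymm_eq_zero s _ (Nat.lt_succ_self _)]
    simp

lemma esymm_one' (s : Multiset ℝ) : s.esymm 1 = s.sum := by
  induction s using Multiset.induction with
  | empty => simp [Multiset.esymm, Multiset.powersetCard_eq_empty _ (by simp : Multiset.card (0:Multiset ℝ) < 1)]
  | cons a s ih =>
    rw [show (1:ℕ) = 0 + 1 from rfl, esymm_cons, esymm0, ih]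
    simp [add_comm]
lemma esymm_pos (s : Multiset ℝ) (k : ℕ) (hk : k ≤ Multiset.card s)
    (hs : ∀ x ∈ s, (0:ℝ) < x) : 0 < s.esymm k := by
  rw [Multiset.esymm]
  have hne : (s.powersetCard k) ≠ 0 := by
    intro h
    have := Multiset.card_powersetCard k s
    rw [h] at this
    simp only [Multiset.card_zero] at this
    exact absurd (Nat.choose_pos hk) (by omega)
  have hpos : ∀ t ∈ s.powersetCard k, (0:ℝ) < t.prod := by
    intro t ht
    rw [Multiset.mem_powersetCard] at ht
    exact Multiset.prod_pos fun x hx => hs x (Multiset.mem_of_le ht.1 hx)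
  obtain ⟨t0, ht0⟩ := Multiset.exists_mem_of_ne_zero hne
  calc (0:ℝ) < t0.prod := hpos t0 ht0
    _ ≤ ((s.powersetCard k).map Multiset.prod).sum := by
        apply Multiset.single_le_sum
        · intro x hx
          obtain ⟨t, ht, rfl⟩ := Multiset.mem_map.mp hx
          exact (hpos t ht).le
        · exact Multiset.mem_map_of_mem _ ht0

lemma sum_sq_identity (s : Multiset ℝ) :
    s.sum ^ 2 = (s.map (fun x => x ^ 2)).sum + 2 * s.esymm 2 := by
  induction s using Multiset.induction with
  | empty => simp [Multiset.esymm, Multiset.powersetCard_eq_empty _ (by simp : Multiset.card (0:Multiset ℝ) < 2)]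
  | cons a s ih =>
    have h2 : (a ::ₘ s).esymm 2 = s.esymm 2 + a * s.esymm 1 := by
      have := esymm_cons a s 1; simpa using this
    rw [Multiset.sum_cons, h2, Multiset.map_cons, Multiset.sum_cons, esymm_one']
    ring_nf
    nlinarith [ih]
lemma esymm_inv (s : Multiset ℝ) (hs : ∀ x ∈ s, x ≠ 0) (j : ℕ) (hj : j ≤ Multiset.card s) :
    (s.map (fun x => x⁻¹)).esymm j * s.prod = s.esymm (Multiset.card s - j) := by
  induction s using Multiset.induction generalizing j with
  | empty =>
    have hj0 : j = 0 := by simpa using hj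
    subst hj0
    simp [esymm0]
  | cons a s ih =>
    have ha : a ≠ 0 := hs a (Multiset.mem_cons_self a s)
    have hs' : ∀ x ∈ s, x ≠ 0 := fun x hx => hs x (Multiset.mem_cons_of_mem hx)
    rw [Multiset.map_cons, Multiset.prod_cons, Multiset.card_cons]
    rcases Nat.eq_zero_or_pos j with rfl | hjpos
    · rw [esymm0, one_mul, Nat.sub_zero, ← Multiset.prod_cons, ← Multiset.card_cons,
        esymm_card]
    · obtain ⟨i, rfl⟩ := Nat.exists_eq_add_of_le hjpos
      rw [add_comm 1 i, esymm_cons]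
      have hile : i ≤ Multiset.card s := by
        have := hj; rw [Multiset.card_cons] at this; omega
      have key : Multiset.card s + 1 - (i + 1) = Multiset.card s - i := by omega
      rw [key]
      rcases Nat.lt_or_ge (Multiset.card s) (i+1) with hlt | hge
      · -- i = card s
        have hieq : i = Multiset.card s := by omega
        subst hieq
        rw [Nat.sub_self, esymm0,
          esymm_eq_zero (s.map (fun x => x⁻¹)) (Multiset.card s + 1)
            (by rw [Multiset.card_map]; exact Nat.lt_succ_self _)]
        have h0 := ih hs' (Multiset.card s) le_rfl
        rw [Nat.sub_self, esymm0] at h0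
        have hcm : Multiset.card (s.map (fun x => x⁻¹)) = Multiset.card s :=
          Multiset.card_map _ _
        rw [← hcm, esymm_card]
        rw [← hcm, esymm_card] at h0
        calc (0 + a⁻¹ * (s.map (fun x => x⁻¹)).prod) * (a * s.prod)
            = (a⁻¹ * a) * ((s.map (fun x => x⁻¹)).prod * s.prod) := by ring
          _ = 1 := by rw [inv_mul_cancel₀ ha, one_mul, h0]
      · have h1 := ih hs' (i+1) hge
        have h2 := ih hs' i hile
        have : Multiset.card s - i = (Multiset.card s - (i+1)) + 1 := by omega
        rw [this, esymm_cons, ← this, ← h2, ← h1]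
        field_simp
        ring
lemma esymm_shift (s : Multiset ℝ) (t : ℝ) (j : ℕ) :
    (s.map (fun x => x + t)).esymm j =
      ∑ i ∈ Finset.range (j + 1),
        ((Multiset.card s - i).choose (j - i) : ℝ) * t ^ (j - i) * s.esymm i := by
  induction s using Multiset.induction generalizing j with
  | empty =>
    rcases Nat.eq_zero_or_pos j with rfl | hj
    · simp [esymm0]
    · rw [esymm_eq_zero _ j (by simpa using hj)]
      rw [Finset.sum_eq_zero]
      intro i hi
      rcases Nat.eq_zero_or_pos i with rfl | hipos
      · simp [Nat.choose_eq_zero_of_lt hj]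
      · rw [esymm_eq_zero 0 i (by simpa using hipos)]; ring
  | cons a s ih =>
    rcases Nat.eq_zero_or_pos j with rfl | hj
    · simp [esymm0]
    · obtain ⟨jj, rfl⟩ : ∃ jj, j = jj + 1 := ⟨j - 1, by omega⟩
      rw [Multiset.map_cons, esymm_cons, ih (jj+1), ih jj]
      -- RHS: expand esymm over cons, split
      have hcons : ∀ i ∈ Finset.range (jj + 1 + 1),
          ((Multiset.card (a ::ₘ s) - i).choose (jj + 1 - i) : ℝ) * t ^ (jj + 1 - i)
            * (a ::ₘ s).esymm i
          = (((Multiset.card s - i).choose (jj + 1 - i) : ℝ) * t ^ (jj + 1 - i) * s.esymm i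
            + (if i ≤ jj then
                ((Multiset.card s - i).choose (jj - i) : ℝ) * t ^ (jj + 1 - i) * s.esymm i
               else 0))
            + (((Multiset.card (a ::ₘ s) - i).choose (jj + 1 - i) : ℝ) * t ^ (jj + 1 - i)
              * (if 1 ≤ i then a * s.esymm (i - 1) else 0)) := by
        intro i hi
        rw [Finset.mem_range] at hi
        have hccons : Multiset.card (a ::ₘ s) = Multiset.card s + 1 := Multiset.card_cons a s
        rcases Nat.eq_zero_or_pos i with rfl | hipos
        · simp only [if_neg (by omega : ¬ (1:ℕ) ≤ 0), if_pos (by omega : (0:ℕ) ≤ jj)]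
          rw [hccons]
          have h3 : (Multiset.card s + 1 - 0).choose (jj + 1 - 0)
              = (Multiset.card s - 0).choose (jj + 1 - 0) + (Multiset.card s - 0).choose (jj - 0) := by
            simp only [Nat.sub_zero]
            exact (Nat.choose_succ_succ _ _).trans (Nat.add_comm _ _)
          rw [h3, esymm0, esymm0]
          push_cast
          ring
        · obtain ⟨ii, rfl⟩ : ∃ ii, i = ii + 1 := ⟨i - 1, by omega⟩
          rw [esymm_cons, if_pos (by omega : 1 ≤ ii + 1)]
          simp only [Nat.add_sub_cancel]
          by_cases hij : ii + 1 ≤ jj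
          · rw [if_pos hij]
            by_cases hic : ii + 1 ≤ Multiset.card s
            · have h1 : Multiset.card (a ::ₘ s) - (ii+1) = (Multiset.card s - (ii+1)) + 1 := by
                rw [Multiset.card_cons]; omega
              have h2 : jj + 1 - (ii+1) = (jj - (ii+1)) + 1 := by omega
              rw [h1, h2, Nat.choose_succ_succ]
              push_cast
              ring
            · rw [esymm_eq_zero s (ii+1) (by omega)]
              have h1 : Multiset.card (a ::ₘ s) - (ii+1) = Multiset.card s - ii := by
                rw [Multiset.card_cons]; omega
              rw [h1]
              ring
          · -- ii + 1 = jj + 1, i.e. ii = jj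
            have hii : ii = jj := by omega
            subst hii
            rw [if_neg hij]
            simp [Nat.sub_self]
      rw [Finset.sum_congr rfl hcons, Finset.sum_add_distrib, Finset.sum_add_distrib]
      -- piece 1 = sum over range (jj+2) of choose(c-i, jj+1-i) t^{jj+1-i} esymm_i = F(s,jj+1)
      -- piece 2 (with if i ≤ jj) = t * F(s,jj)
      -- piece 3 = a * F(s,jj)
      have p2 : ∑ i ∈ Finset.range (jj + 1 + 1),
          (if i ≤ jj then ((Multiset.card s - i).choose (jj - i) : ℝ) * t ^ (jj + 1 - i) * s.esymm i else 0)
          = t * ∑ i ∈ Finset.range (jj + 1),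
              ((Multiset.card s - i).choose (jj - i) : ℝ) * t ^ (jj - i) * s.esymm i := by
        rw [← Finset.sum_filter]
        have hfilt : Finset.filter (fun i => i ≤ jj) (Finset.range (jj + 1 + 1))
            = Finset.range (jj + 1) := by
          ext x
          simp only [Finset.mem_filter, Finset.mem_range]
          omega
        rw [hfilt, Finset.mul_sum]
        apply Finset.sum_congr rfl
        intro i hi
        rw [Finset.mem_range] at hi
        have : jj + 1 - i = (jj - i) + 1 := by omega
        rw [this, pow_succ]
        ring
      have p3 : ∑ i ∈ Finset.range (jj + 1 + 1),
          (((Multiset.card (a ::ₘ s) - i).choose (jj + 1 - i) : ℝ) * t ^ (jj + 1 - i)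
            * (if 1 ≤ i then a * s.esymm (i - 1) else 0))
          = a * ∑ i ∈ Finset.range (jj + 1),
              ((Multiset.card s - i).choose (jj - i) : ℝ) * t ^ (jj - i) * s.esymm i := by
        rw [Finset.sum_range_succ']
        simp only [if_neg (by omega : ¬ (1:ℕ) ≤ 0), mul_zero, add_zero,
          if_pos (by omega : ∀ i : ℕ, 1 ≤ i + 1)]
        rw [Finset.mul_sum]
        apply Finset.sum_congr rfl
        intro i hi
        have h1 : Multiset.card (a ::ₘ s) - (i + 1) = Multiset.card s - i := by
          rw [Multiset.card_cons]; omega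
        have h2 : jj + 1 - (i + 1) = jj - i := by omega
        rw [h1, h2, if_pos (by omega : 1 ≤ i + 1)]
        simp only [Nat.add_sub_cancel]
        ring
      rw [p2, p3]
      ring
lemma exists_deriv_multiset (s : Multiset ℝ) (hpos : 0 < Multiset.card s) :
    ∃ s' : Multiset ℝ, Multiset.card s' = Multiset.card s - 1 ∧
      ∀ j : ℕ, j ≤ Multiset.card s - 1 →
        (Multiset.card s : ℝ) * s'.esymm j = ((Multiset.card s - j : ℕ) : ℝ) * s.esymm j := by
  classical
  set N := Multiset.card s with hN
  set p : ℝ[X] := (s.map (fun r => X + C r)).prod with hp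
  have hmonic : p.Monic := by
    apply monic_multiset_prod_of_monic
    intro r _
    exact monic_X_add_C r
  have hdegp : p.natDegree = N := by
    rw [hp, natDegree_multiset_prod_of_monic]
    · simp [Function.comp, hN]
    · intro q hq
      obtain ⟨r, _, rfl⟩ := Multiset.mem_map.mp hq
      exact monic_X_add_C r
  have hrootsp : p.roots = s.map (fun r => -r) := by
    have h : p = ((s.map (fun r => -r)).map (fun a => X - C a)).prod := by
      rw [hp, Multiset.map_map]
      congr 1
      apply Multiset.map_congr rfl
      intro r _
      simp [sub_neg_eq_add]
    rw [h, roots_multiset_prod_X_sub_C]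
  have hcardroots : Multiset.card p.roots = N := by rw [hrootsp, Multiset.card_map]
  set q : ℝ[X] := derivative p with hq
  have hcoeffq : q.coeff (N - 1) = (N : ℝ) := by
    rw [hq, coeff_derivative]
    have h1 : N - 1 + 1 = N := by omega
    rw [h1, ← hdegp, hmonic.coeff_natDegree, one_mul, hdegp]
    rw [Nat.cast_sub (by omega : 1 ≤ N)]
    ring
  have hNne : (N : ℝ) ≠ 0 := by
    have : 0 < (N:ℝ) := by exact_mod_cast hpos
    linarith
  have hqcne : q.coeff (N - 1) ≠ 0 := by rw [hcoeffq]; exact hNne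
  have hdegq : q.natDegree = N - 1 := by
    apply le_antisymm
    · have := natDegree_derivative_le p
      rw [hdegp] at this
      exact this
    · exact le_natDegree_of_ne_zero hqcne
  have hcardq : Multiset.card q.roots = q.natDegree := by
    have h1 : Multiset.card p.roots ≤ Multiset.card q.roots + 1 :=
      Polynomial.card_roots_le_derivative p
    have h2 : Multiset.card q.roots ≤ q.natDegree := by
      have hqne : q ≠ 0 := fun h => hqcne (by rw [h]; simp)
      simpa using Polynomial.card_roots' q
    rw [hcardroots] at h1
    rw [hdegq]
    omega
  have hlead : q.leadingCoeff = (N : ℝ) := by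
    rw [Polynomial.leadingCoeff, hdegq, hcoeffq]
  refine ⟨q.roots.map (fun r => -r), ?_, ?_⟩
  · rw [Multiset.card_map, hcardq, hdegq]
  · intro j hj
    have hco : q.coeff (N - 1 - j) = q.leadingCoeff * (-1) ^ (q.natDegree - (N-1-j)) *
        q.roots.esymm (q.natDegree - (N-1-j)) :=
      Polynomial.coeff_eq_esymm_roots_of_card hcardq (by omega)
    have hexp : q.natDegree - (N - 1 - j) = j := by rw [hdegq]; omega
    rw [hexp, hlead] at hco
    have hqroots : q.roots = (q.roots.map (fun r => -r)).map (fun r => -r) := by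
      rw [Multiset.map_map]; simp
    have hesymmneg : q.roots.esymm j = (-1)^j * (q.roots.map (fun r => -r)).esymm j := by
      rw [hqroots, Multiset.esymm_neg, Multiset.map_map]
      simp
    rw [hesymmneg] at hco
    have hco2 : q.coeff (N - 1 - j) = ((N - j : ℕ) : ℝ) * s.esymm j := by
      rw [hq, coeff_derivative]
      have h1 : N - 1 - j + 1 = N - j := by omega
      rw [h1]
      have h2 : p.coeff (N - j) = s.esymm j := by
        rw [hp, Multiset.prod_X_add_C_coeff s (by omega : N - j ≤ Multiset.card s)]
        congr 1
        omega
      rw [h2, show N - 1 - j = (N - j) - 1 from by omega,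
        Nat.cast_sub (by omega : 1 ≤ N - j)]
      ring
    rw [hco2] at hco
    rw [hco]
    have hsq : (-1:ℝ)^j * (-1)^j = 1 := by
      rw [← pow_add]
      exact Even.neg_one_pow ⟨j, rfl⟩
    linear_combination (-(N:ℝ) * ((Multiset.map (fun r => -r) q.roots).esymm j)) * hsq
lemma newton_special : ∀ (N : ℕ) (μ : Multiset ℝ), Multiset.card μ = N → ∀ k, 2 ≤ k →
    (∀ j, 1 ≤ j → j ≤ k - 2 → 0 < μ.esymm j) → μ.esymm (k - 1) = 0 → μ.esymm k ≤ 0 := by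
  intro N
  induction N using Nat.strong_induction_on with
  | _ N IH =>
    intro μ hcard k hk hpos hzero
    rcases Nat.lt_or_ge N k with hNk | hNk
    · rw [esymm_eq_zero μ k (by omega)]
    rcases Nat.eq_or_lt_of_le hNk with hNeq | hNlt
    · -- base case N = k
      by_contra hcon
      push_neg at hcon
      rw [show k = Multiset.card μ from by omega, esymm_card] at hcon
      have hne : ∀ x ∈ μ, x ≠ 0 := by
        intro x hx hx0
        rw [Multiset.prod_eq_zero (hx0 ▸ hx)] at hcon
        exact lt_irrefl 0 hcon
      set r := μ.map (fun x => x⁻¹) with hr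
      have h1 : r.esymm 1 = 0 := by
        have := esymm_inv μ hne 1 (by omega)
        rw [show Multiset.card μ - 1 = k - 1 from by omega, hzero] at this
        have hP : μ.prod ≠ 0 := ne_of_gt hcon
        exact (mul_eq_zero.mp this).resolve_right hP
      have h2 : 0 < r.esymm 2 := by
        have := esymm_inv μ hne 2 (by omega)
        have hk2 : 0 < μ.esymm (Multiset.card μ - 2) := by
          rcases Nat.eq_or_lt_of_le hk with h2k | h3k
          · rw [show Multiset.card μ - 2 = 0 from by omega, esymm0]; norm_num
          · exact hpos _ (by omega) (by omega)
        nlinarith [this, hcon]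
      have hsq := sum_sq_identity r
      rw [← esymm_one', h1] at hsq
      have hnn : (0:ℝ) ≤ (r.map (fun x => x ^ 2)).sum := by
        apply Multiset.sum_nonneg
        intro x hx
        obtain ⟨y, _, rfl⟩ := Multiset.mem_map.mp hx
        positivity
      nlinarith [hsq, h2, hnn]
    · -- inductive step N > k
      obtain ⟨s', hcard', hrel⟩ := exists_deriv_multiset μ (by omega)
      rw [hcard] at hcard' hrel
      have hNpos : (0:ℝ) < (N : ℝ) := by exact_mod_cast (by omega : 0 < N)
      have hpos' : ∀ j, 1 ≤ j → j ≤ k - 2 → 0 < s'.esymm j := by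
        intro j hj1 hj2
        have h := hrel j (by omega)
        have hrhs : 0 < ((N - j : ℕ) : ℝ) * μ.esymm j := by
          apply mul_pos
          · exact_mod_cast (by omega : 0 < N - j)
          · exact hpos j hj1 hj2
        nlinarith [h, hrhs, hNpos]
      have hzero' : s'.esymm (k - 1) = 0 := by
        have h := hrel (k-1) (by omega)
        rw [hzero, mul_zero] at h
        nlinarith [h, hNpos]
      have hres := IH (N-1) (by omega) s' hcard' k hk hpos' hzero'
      have h := hrel k (by omega)
      have hNk' : (0:ℝ) < ((N - k : ℕ) : ℝ) := by exact_mod_cast (by omega : 0 < N - k)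
      nlinarith [h, hres, hNpos, hNk']
def Gam (k : ℕ) (s : Multiset ℝ) : Prop := ∀ j, 1 ≤ j → j ≤ k → 0 < s.esymm j

lemma Gam.mono {k k' : ℕ} {s : Multiset ℝ} (h : Gam k s) (hk : k' ≤ k) : Gam k' s :=
  fun j h1 h2 => h j h1 (h2.trans hk)

lemma Gam.card_le {k : ℕ} {s : Multiset ℝ} (h : Gam k s) (hk : 1 ≤ k) :
    k ≤ Multiset.card s := by
  by_contra hc
  push_neg at hc
  have := h k hk le_rfl
  rw [esymm_eq_zero s k hc] at this
  exact lt_irrefl 0 this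

lemma Gam.shift {k : ℕ} {s : Multiset ℝ} (h : Gam k s) (t : ℝ) (ht : 0 ≤ t) :
    Gam k (s.map (fun x => x + t)) := by
  intro j hj1 hj2
  rw [esymm_shift]
  have hmem : j ∈ Finset.range (j + 1) := by simp
  apply Finset.sum_pos' _ ⟨j, hmem, ?_⟩
  · intro i hi
    rw [Finset.mem_range] at hi
    rcases Nat.eq_zero_or_pos i with rfl | hipos
    · rw [esymm0]
      positivity
    · have := h i hipos (by omega)
      positivity
  · rw [Nat.sub_self]
    simp only [pow_zero, Nat.choose_zero_right, Nat.cast_one, one_mul, mul_one]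
    exact h j hj1 hj2

lemma Gam.max_pos {k : ℕ} {a : ℝ} {t : Multiset ℝ} (h : Gam k (a ::ₘ t)) (hk : 1 ≤ k)
    (hmax : ∀ x ∈ t, x ≤ a) : 0 < a := by
  have h1 := h 1 le_rfl hk
  rw [esymm_one', Multiset.sum_cons] at h1
  by_contra hc
  push_neg at hc
  have hsum : t.sum ≤ (Multiset.card t : ℝ) * a := by
    simpa [nsmul_eq_mul] using Multiset.sum_le_card_nsmul t a hmax
  have hca : (0:ℝ) ≤ (Multiset.card t : ℝ) := by positivity
  nlinarith [h1, hsum, hca, hc]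
lemma Gam.erase_max : ∀ (k : ℕ) (a : ℝ) (t : Multiset ℝ), Gam k (a ::ₘ t) →
    (∀ x ∈ t, x ≤ a) → Gam (k - 1) t := by
  intro k
  induction k using Nat.strong_induction_on with
  | _ k IH =>
    intro a t hg hmax
    rcases Nat.lt_or_ge k 2 with hk1 | hk2
    · intro j hj1 hj2
      omega
    intro j hj1 hj2
    rcases Nat.lt_or_ge j (k - 1) with hjlt | hjge
    · exact IH (k-1) (by omega) a t (hg.mono (by omega)) hmax j hj1 (by omega)
    have hjeq : j = k - 1 := by omega
    subst hjeq
    by_contra hle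
    push_neg at hle
    -- the shifted symmetric function as an explicit function of u
    set f : ℝ → ℝ := fun u => ∑ i ∈ Finset.range (k - 1 + 1),
        ((Multiset.card t - i).choose (k - 1 - i) : ℝ) * u ^ (k - 1 - i) * t.esymm i with hf
    have hfe : ∀ u : ℝ, (t.map (fun x => x + u)).esymm (k-1) = f u := by
      intro u
      rw [esymm_shift]
    have hcont : Continuous f := by
      apply continuous_finset_sum
      intro i _
      fun_prop
    set T : ℝ := 1 + (t.map (fun x => |x|)).sum with hT
    have habs : ∀ x ∈ t, |x| ≤ (t.map (fun x => |x|)).sum := by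
      intro x hx
      apply Multiset.single_le_sum
      · intro y hy
        obtain ⟨z, _, rfl⟩ := Multiset.mem_map.mp hy
        positivity
      · exact Multiset.mem_map_of_mem _ hx
    have habsnn : (0:ℝ) ≤ (t.map (fun x => |x|)).sum := by
      apply Multiset.sum_nonneg
      intro y hy
      obtain ⟨z, _, rfl⟩ := Multiset.mem_map.mp hy
      positivity
    have hT0 : (0:ℝ) ≤ T := by rw [hT]; linarith
    have hcard : k ≤ Multiset.card t + 1 := by
      have := hg.card_le (by omega)
      rwa [Multiset.card_cons] at this
    have hfT : 0 < f T := by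
      rw [← hfe T]
      apply esymm_pos
      · rw [Multiset.card_map]; omega
      · intro x hx
        obtain ⟨y, hy, rfl⟩ := Multiset.mem_map.mp hx
        have h1 := habs y hy
        have h2 := abs_le.mp (le_refl |y|) |>.1
        rw [hT]
        linarith [neg_abs_le y]
    have hf0 : f 0 ≤ 0 := by
      rw [← hfe 0]
      have : t.map (fun x => x + 0) = t := by
        rw [show (fun x : ℝ => x + 0) = id from by funext x; simp, Multiset.map_id]
      rw [this]
      exact hle
    obtain ⟨u₀, hu₀I, hu₀⟩ : ∃ u₀ ∈ Set.Icc (0:ℝ) T, f u₀ = 0 := by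
      have := intermediate_value_Icc hT0 hcont.continuousOn
      have h0mem : (0:ℝ) ∈ Set.Icc (f 0) (f T) := ⟨hf0, hfT.le⟩
      obtain ⟨u₀, hu₀, hfu₀⟩ := this h0mem
      exact ⟨u₀, hu₀, hfu₀⟩
    set t' := t.map (fun x => x + u₀) with ht'
    have hg' : Gam k ((a + u₀) ::ₘ t') := by
      have := hg.shift u₀ hu₀I.1
      rwa [Multiset.map_cons] at this
    have hmax' : ∀ x ∈ t', x ≤ a + u₀ := by
      intro x hx
      obtain ⟨y, hy, rfl⟩ := Multiset.mem_map.mp hx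
      linarith [hmax y hy]
    have hGt' : Gam (k - 2) t' := by
      have := IH (k-1) (by omega) (a + u₀) t' (hg'.mono (by omega)) hmax'
      rwa [show k - 1 - 1 = k - 2 from by omega] at this
    have hz : t'.esymm (k-1) = 0 := by rw [ht', hfe u₀]; exact hu₀
    have hkpos : 0 < t'.esymm k := by
      have h1 := hg' k (by omega) le_rfl
      rw [show k = (k-1) + 1 from by omega, esymm_cons, show k - 1 + 1 = k from by omega,
        hz, mul_zero, add_zero] at h1
      exact h1
    have := newton_special (Multiset.card t') t' rfl k hk2 (fun j h1 h2 => hGt' j h1 h2) hz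
    linarith

end Aux

section Main
open Multiset

theorem stmt3 (n m : ℕ) (hm : 1 ≤ m) (hmn : m ≤ n) (lam : Fin n → ℝ)
    (hdec : ∀ i j : Fin n, i ≤ j → lam j ≤ lam i)
    (hlam : lam ∈ GammaCone n m) :
    (∏ i ∈ Finset.univ.filter (fun i : Fin n => (i : ℕ) < m - 1), lam i)
      ≤ S n (m - 1) lam := by
  classical
  -- multiset of the tail entries with indices ≥ j
  set msT : ℕ → Multiset ℝ :=
    fun j => ((Finset.univ.filter (fun i : Fin n => j ≤ (i : ℕ))).val.map lam) with hmsT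
  have hS : ∀ k, S n k lam = (msT 0).esymm k := by
    intro k
    have h0 : (Finset.univ.filter (fun i : Fin n => 0 ≤ (i : ℕ))) = Finset.univ := by
      apply Finset.filter_true_of_mem
      intro i _
      exact Nat.zero_le _
    rw [hmsT]
    simp only [h0]
    rw [Finset.esymm_map_val]
    rfl
  have hcons : ∀ j (hj : j < n),
      msT j = lam ⟨j, hj⟩ ::ₘ msT (j + 1) := by
    intro j hj
    have hins : (Finset.univ.filter (fun i : Fin n => j ≤ (i : ℕ)))
        = insert (⟨j, hj⟩ : Fin n) (Finset.univ.filter (fun i : Fin n => j + 1 ≤ (i : ℕ))) := by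
      ext x
      simp only [Finset.mem_filter, Finset.mem_insert, Finset.mem_univ, true_and]
      constructor
      · intro hx
        rcases Nat.eq_or_lt_of_le hx with heq | hlt
        · left; exact Fin.ext heq.symm
        · right; omega
      · rintro (rfl | hx)
        · exact le_rfl
        · omega
    have hnotmem : (⟨j, hj⟩ : Fin n) ∉ (Finset.univ.filter (fun i : Fin n => j + 1 ≤ (i : ℕ))) := by
      simp
    rw [hmsT]
    simp only [hins, Finset.insert_val_of_notMem hnotmem, Multiset.map_cons]
  have hmax : ∀ j (hj : j < n), ∀ x ∈ msT (j + 1), x ≤ lam ⟨j, hj⟩ := by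
    intro j hj x hx
    obtain ⟨i, hi, rfl⟩ := Multiset.mem_map.mp hx
    rw [Finset.mem_val, Finset.mem_filter] at hi
    apply hdec
    rw [Fin.le_def]
    simp only [Fin.val_mk]
    omega
  -- the Gamma chain
  have hchain : ∀ j, j ≤ m - 1 → Gam (m - j) (msT j) := by
    intro j hj
    induction j with
    | zero =>
      intro i h1 h2
      rw [← hS]
      exact hlam i h1 (by omega)
    | succ j ih =>
      have hjm : j ≤ m - 1 := by omega
      have hjn : j < n := by omega
      have hprev := ih hjm
      have := Gam.erase_max (m - j) (lam ⟨j, by omega⟩) (msT (j+1))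
        (by rw [← hcons j hjn]; exact hprev) (hmax j hjn)
      rwa [show m - j - 1 = m - (j + 1) from by omega] at this
  -- positivity of the leading entries
  have hlampos : ∀ j (hj2 : j ≤ m - 2), 0 < lam ⟨j, by omega⟩ := by
    intro j hj
    have hjn : j < n := by omega
    have hg : Gam (m - j) (msT j) := hchain j (by omega)
    rw [hcons j hjn] at hg
    exact hg.max_pos (by omega) (hmax j hjn)
  -- downward induction
  have hdown : ∀ d, d ≤ m - 1 →
      (∏ i ∈ Finset.univ.filter (fun i : Fin n => m - 1 - d ≤ (i : ℕ) ∧ (i : ℕ) < m - 1), lam i)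
        ≤ (msT (m - 1 - d)).esymm d := by
    intro d
    induction d with
    | zero =>
      intro _
      have hempty : Finset.univ.filter
          (fun i : Fin n => m - 1 - 0 ≤ (i : ℕ) ∧ (i : ℕ) < m - 1) = ∅ := by
        apply Finset.filter_false_of_mem
        intro i _
        omega
      rw [hempty, Finset.prod_empty, esymm0]
    | succ d ih =>
      intro hd
      set j := m - 1 - (d + 1) with hjdef
      have hj1 : j + 1 = m - 1 - d := by omega
      have hjn : j < n := by omega
      have hjm2 : j ≤ m - 2 := by omega
      -- split the product
      have hins : Finset.univ.filter (fun i : Fin n => j ≤ (i : ℕ) ∧ (i : ℕ) < m - 1)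
          = insert (⟨j, hjn⟩ : Fin n)
            (Finset.univ.filter (fun i : Fin n => j + 1 ≤ (i : ℕ) ∧ (i : ℕ) < m - 1)) := by
        ext x
        simp only [Finset.mem_filter, Finset.mem_insert, Finset.mem_univ, true_and]
        constructor
        · rintro ⟨hx1, hx2⟩
          rcases Nat.eq_or_lt_of_le hx1 with heq | hlt
          · left; exact Fin.ext heq.symm
          · right; omega
        · rintro (rfl | hx)
          · refine ⟨by simp, ?_⟩
            simp only [Fin.val_mk]
            omega
          · omega
      have hnm : (⟨j, hjn⟩ : Fin n) ∉
          Finset.univ.filter (fun i : Fin n => j + 1 ≤ (i : ℕ) ∧ (i : ℕ) < m - 1) := by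
        simp
      rw [hins, Finset.prod_insert hnm]
      have hg1 : Gam (m - (j + 1)) (msT (j + 1)) := hchain (j+1) (by omega)
      have hmj : m - (j + 1) = d + 1 := by omega
      have hpos1 : 0 < (msT (j + 1)).esymm (d + 1) := by
        have := hg1 (d+1) (by omega) (by omega)
        exact this
      have hlj : 0 < lam ⟨j, hjn⟩ := hlampos j hjm2
      have hih := ih (by omega)
      rw [← hj1] at hih
      rw [hcons j hjn, esymm_cons]
      have hstep : lam ⟨j, hjn⟩ *
          (∏ i ∈ Finset.univ.filter (fun i : Fin n => j + 1 ≤ (i : ℕ) ∧ (i : ℕ) < m - 1), lam i)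
          ≤ lam ⟨j, hjn⟩ * (msT (j + 1)).esymm d :=
        mul_le_mul_of_nonneg_left hih hlj.le
      linarith [hpos1, hstep]
  -- conclude
  have hfin := hdown (m - 1) le_rfl
  rw [show m - 1 - (m - 1) = 0 from by omega] at hfin
  have hfilt : Finset.univ.filter (fun i : Fin n => 0 ≤ (i : ℕ) ∧ (i : ℕ) < m - 1)
      = Finset.univ.filter (fun i : Fin n => (i : ℕ) < m - 1) := by
    ext x
    simp only [Finset.mem_filter, Finset.mem_univ, true_and]
    omega
  rw [hfilt] at hfin
  rw [hS]
  exact hfin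

end Main
end

section
/- For λ ∈ Γ_m ordered decreasingly (m ≥ 2), the quotients S_m(λ)/S_{m-1;i}(λ) are positive for all i, monotone in i in the sense that S_m/S_{m-1;n} ≤ S_m/S_{m-1;n-1} ≤ ⋯ ≤ S_m/S_{m-1;1}, and all bounded above by S_1(λ)/θ for a constant θ = θ(n,m) > 0. -/
open Finset

namespace NA

lemma esymm_cons (a : ℝ) (s : Multiset ℝ) (k : ℕ) :
    (a ::ₘ s).esymm (k+1) = s.esymm (k+1) + a * s.esymm k := by
  simp [Multiset.esymm, Multiset.powersetCard_cons, Multiset.map_map, Function.comp,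
    ← Multiset.sum_map_mul_left]

lemma esymm_zero' (s : Multiset ℝ) : s.esymm 0 = 1 := by
  simp [Multiset.esymm]

lemma esymm_one' (s : Multiset ℝ) : s.esymm 1 = s.sum := by
  simp [Multiset.esymm, Multiset.powersetCard_one, Multiset.map_map, Function.comp]

lemma sq_sum_le (s : Multiset ℝ) :
    s.sum ^ 2 ≤ (Multiset.card s : ℝ) * (s.map (fun x => x ^ 2)).sum := by
  induction s using Multiset.induction with
  | empty => simp
  | cons a s ih =>
      simp only [Multiset.sum_cons, Multiset.card_cons, Multiset.map_cons, Nat.cast_add,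
        Nat.cast_one]
      have hc : (0:ℝ) ≤ (Multiset.card s : ℝ) := by positivity
      have hq : (0:ℝ) ≤ (s.map (fun x => x ^ 2)).sum := by
        apply Multiset.sum_nonneg; intro x hx
        obtain ⟨y, _, rfl⟩ := Multiset.mem_map.1 hx
        positivity
      rcases eq_or_lt_of_le hc with hc0 | hc0
      · have h0 : s.sum ^ 2 ≤ 0 := by rw [← hc0] at ih; simpa using ih
        have hs0 : s.sum = 0 := by nlinarith [sq_nonneg s.sum]
        rw [← hc0, hs0]; nlinarith
      · nlinarith [ih, sq_nonneg ((Multiset.card s : ℝ) * a - s.sum),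
          mul_le_mul_of_nonneg_left ih (le_of_lt hc0), mul_nonneg hc hq]

lemma e1_sq (s : Multiset ℝ) :
    s.esymm 1 ^ 2 = (s.map (fun x => x ^ 2)).sum + 2 * s.esymm 2 := by
  induction s using Multiset.induction with
  | empty => simp [Multiset.esymm, Multiset.powersetCard_eq_empty 1 (s := (0 : Multiset ℝ)) (by simp),
      Multiset.powersetCard_eq_empty 2 (s := (0 : Multiset ℝ)) (by simp)]
  | cons a s ih =>
      have h1 : (a ::ₘ s).esymm 1 = s.esymm 1 + a * s.esymm 0 := esymm_cons a s 0
      have h2 : (a ::ₘ s).esymm 2 = s.esymm 2 + a * s.esymm 1 := esymm_cons a s 1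
      rw [h1, h2, esymm_zero', Multiset.map_cons, Multiset.sum_cons]
      nlinarith [ih]

lemma two_choose_two (n : ℕ) : ((n.choose 2 : ℕ) : ℝ) * 2 = (n : ℝ) * ((n : ℝ) - 1) := by
  induction n with
  | zero => simp
  | succ m ih =>
      rw [Nat.choose_succ_succ m 1]
      push_cast [Nat.choose_one_right] at *
      linarith

/-- Newton's inequality, case k = 1 : n² e₂ ≤ C(n,2) e₁². -/
lemma newton_one (s : Multiset ℝ) :
    (Multiset.card s : ℝ)^2 * s.esymm 2 ≤ ((Multiset.card s).choose 2 : ℝ) * s.esymm 1 ^ 2 := by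
  have h := sq_sum_le s
  have he := e1_sq s
  rw [esymm_one'] at he
  have hch := two_choose_two (Multiset.card s)
  have hc : (0:ℝ) ≤ (Multiset.card s : ℝ) := by positivity
  rw [esymm_one']
  nlinarith [mul_le_mul_of_nonneg_left h hc]


lemma esymm_of_card_lt {s : Multiset ℝ} {k : ℕ} (h : Multiset.card s < k) :
    s.esymm k = 0 := by
  simp [Multiset.esymm, Multiset.powersetCard_eq_empty _ h]

lemma esymm_card_eq_prod (s : Multiset ℝ) : s.esymm (Multiset.card s) = s.prod := by
  induction s using Multiset.induction with
  | empty => simp [Multiset.esymm]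
  | cons a s ih =>
      rw [Multiset.card_cons, esymm_cons, esymm_of_card_lt (by simp), ih, Multiset.prod_cons]
      ring

lemma refl_esymm (s : Multiset ℝ) (hs : ∀ x ∈ s, x ≠ 0) :
    ∀ k, k ≤ Multiset.card s →
      (s.map (fun x => x⁻¹)).esymm k * s.prod = s.esymm (Multiset.card s - k) := by
  induction s using Multiset.induction with
  | empty =>
      intro k hk
      have : k = 0 := Nat.le_zero.mp (by simpa using hk)
      subst this; simp [Multiset.esymm]
  | cons a s ih =>
      intro k hk
      have ha : a ≠ 0 := hs a (Multiset.mem_cons_self a s)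
      have hs' : ∀ x ∈ s, x ≠ 0 := fun x hx => hs x (Multiset.mem_cons_of_mem hx)
      rcases k with _ | j
      · simp only [esymm_zero', one_mul, Nat.sub_zero]
        rw [esymm_card_eq_prod]
      set n := Multiset.card s with hn
      have hcard : Multiset.card (a ::ₘ s) = n + 1 := by simp [hn]
      rw [Multiset.map_cons, esymm_cons, Multiset.prod_cons, hcard]
      rcases Nat.lt_or_ge j n with hj | hj
      · -- j + 1 ≤ n
        have h1 : (Multiset.map (fun x => x⁻¹) s).esymm (j + 1) * s.prod
            = s.esymm (n - (j + 1)) := ih hs' (j + 1) (by omega)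
        have h2 : (Multiset.map (fun x => x⁻¹) s).esymm j * s.prod = s.esymm (n - j) :=
          ih hs' j (by omega)
        have hnj : n + 1 - (j + 1) = (n - (j + 1)) + 1 := by omega
        rw [hnj, esymm_cons]
        have hnj2 : (n - (j + 1)) + 1 = n - j := by omega
        rw [hnj2]
        have expand : ((Multiset.map (fun x => x⁻¹) s).esymm (j + 1)
              + a⁻¹ * (Multiset.map (fun x => x⁻¹) s).esymm j) * (a * s.prod)
            = a * ((Multiset.map (fun x => x⁻¹) s).esymm (j + 1) * s.prod)
              + (a⁻¹ * a) * ((Multiset.map (fun x => x⁻¹) s).esymm j * s.prod) := by ring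
        rw [expand, inv_mul_cancel₀ ha, h1, h2]
        ring
      · -- j ≥ n, and j + 1 ≤ n + 1 so j = n
        have hj' : j = n := by omega
        subst hj'
        have h2 : (Multiset.map (fun x => x⁻¹) s).esymm n * s.prod = s.esymm (n - n) :=
          ih hs' n (by omega)
        rw [Nat.sub_self, esymm_zero'] at h2
        have h1 : (Multiset.map (fun x => x⁻¹) s).esymm (n + 1) = 0 := by
          apply esymm_of_card_lt; simp [hn]
        have hz : n + 1 - (n + 1) = 0 := by omega
        rw [h1, hz, esymm_zero']
        have expand : ((0:ℝ) + a⁻¹ * (Multiset.map (fun x => x⁻¹) s).esymm n) * (a * s.prod)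
            = (a⁻¹ * a) * ((Multiset.map (fun x => x⁻¹) s).esymm n * s.prod) := by ring
        rw [expand, inv_mul_cancel₀ ha, h2]
        ring

open Polynomial in
lemma deriv_step (s : Multiset ℝ) (h2 : 2 ≤ Multiset.card s) :
    ∃ t : Multiset ℝ, Multiset.card t = Multiset.card s - 1 ∧
      ∀ j ≤ Multiset.card s - 1,
        (Multiset.card s : ℝ) * t.esymm j = ((Multiset.card s - j : ℕ) : ℝ) * s.esymm j := by
  set n := Multiset.card s with hn
  set f : Polynomial ℝ := (s.map fun a => X - C a).prod with hf
  have hmonic : f.Monic := monic_multiset_prod_of_monic _ _ (fun a _ => monic_X_sub_C a)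
  have hdeg : f.natDegree = n := by
    rw [hf]
    exact natDegree_multiset_prod_X_sub_C_eq_card s
  have hroots : f.roots = s := roots_multiset_prod_X_sub_C s
  set g := derivative f with hg
  have hcoefftop : g.coeff (n-1) = (n:ℝ) := by
    rw [hg, coeff_derivative]
    have he : (n-1)+1 = n := by omega
    rw [he]
    rw [← hdeg, hmonic.coeff_natDegree, hdeg]
    have : ((n-1 : ℕ):ℝ) + 1 = (n:ℝ) := by
      exact_mod_cast congrArg (Nat.cast (R := ℝ)) he
    rw [one_mul, this]
  have hnpos : 0 < n := by omega
  have hnne : (n:ℝ) ≠ 0 := by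
    exact_mod_cast hnpos.ne'
  have hgne : g ≠ 0 := fun h => hnne (by rw [← hcoefftop, h]; simp)
  have hdegg : g.natDegree = n - 1 := by
    apply le_antisymm
    · calc g.natDegree ≤ f.natDegree - 1 := natDegree_derivative_le f
        _ = n - 1 := by rw [hdeg]
    · exact le_natDegree_of_ne_zero (by rw [hcoefftop]; exact hnne)
  have hcardroots : Multiset.card g.roots = n - 1 := by
    have hub : Multiset.card g.roots ≤ n - 1 := by
      calc Multiset.card g.roots ≤ g.natDegree := card_roots' g
        _ = n - 1 := hdegg
    have hlb : n ≤ Multiset.card g.roots + 1 := by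
      calc n = Multiset.card f.roots := by rw [hroots]
        _ ≤ Multiset.card (derivative f).roots + 1 := card_roots_le_derivative f
    omega
  set t : Multiset ℝ := g.roots with ht
  have hlc : g.leadingCoeff = (n:ℝ) := by
    rw [leadingCoeff, hdegg, hcoefftop]
  have hfact : C (n:ℝ) * (g.roots.map fun a => X - C a).prod = g := by
    rw [← hlc]
    exact C_leadingCoeff_mul_prod_multiset_X_sub_C (by rw [hcardroots, hdegg])
  refine ⟨t, hcardroots, ?_⟩
  intro j hj
  have hA : g.coeff (n-1-j) = (n:ℝ) * ((-1)^j * t.esymm j) := by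
    rw [← hfact, coeff_C_mul]
    have hk : n-1-j ≤ Multiset.card t := by omega
    rw [Multiset.prod_X_sub_C_coeff t hk, hcardroots]
    have e1 : n-1-(n-1-j) = j := by omega
    rw [e1]
  have hB : g.coeff (n-1-j) = (-1)^j * s.esymm j * ((n-j : ℕ):ℝ) := by
    rw [hg, coeff_derivative]
    have he : (n-1-j)+1 = n-j := by omega
    rw [he]
    have hc : f.coeff (n-j) = (-1)^j * s.esymm j := by
      have hk : n - j ≤ Multiset.card s := by omega
      rw [hf, Multiset.prod_X_sub_C_coeff s hk, ← hn]
      have e2 : n-(n-j) = j := by omega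
      rw [e2]
    rw [hc]
    congr 1
    exact_mod_cast congrArg (Nat.cast (R := ℝ)) he
  have hpow : ((-1:ℝ))^j ≠ 0 := pow_ne_zero j (by norm_num)
  apply mul_left_cancel₀ hpow
  have := hA.symm.trans hB
  ring_nf at this ⊢
  linarith [this]

lemma nat_cident (n j : ℕ) (hn : 1 ≤ n) :
    (n - j) * n.choose j = n * (n-1).choose j := by
  rcases Nat.lt_or_ge j n with hj | hj
  · have h1 := Nat.add_one_mul_choose_eq (n-1) j
    have h2 := Nat.choose_succ_right_eq n j
    have hsn : n - 1 + 1 = n := by omega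
    rw [hsn] at h1
    rw [h2] at h1
    rw [Nat.mul_comm]
    exact h1.symm
  · have h1 : n - j = 0 := by omega
    have h2 : (n-1).choose j = 0 := Nat.choose_eq_zero_of_lt (by omega)
    simp [h1, h2]

lemma cidR (n j : ℕ) (hn : 1 ≤ n) :
    ((n - j : ℕ):ℝ) * (n.choose j : ℝ) = (n:ℝ) * ((n-1).choose j : ℝ) := by
  exact_mod_cast congrArg (Nat.cast (R := ℝ)) (nat_cident n j hn)

lemma choose_logconcave (n k : ℕ) (hk1 : 1 ≤ k) (hk2 : k + 1 ≤ n) :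
    n.choose (k-1) * n.choose (k+1) ≤ n.choose k * n.choose k := by
  have h1 := Nat.choose_succ_right_eq n (k-1)
  have h2 := Nat.choose_succ_right_eq n k
  have hk : k - 1 + 1 = k := by omega
  rw [hk] at h1
  -- h1 : choose n k * k = choose n (k-1) * (n - (k-1))
  -- h2 : choose n (k+1) * (k+1) = choose n k * (n - k)
  have key : n.choose (k-1) * n.choose (k+1) * ((n - (k-1)) * (k+1))
      = n.choose k * n.choose k * (k * (n - k)) := by
    calc n.choose (k-1) * n.choose (k+1) * ((n - (k-1)) * (k+1))
        = (n.choose (k-1) * (n - (k-1))) * (n.choose (k+1) * (k+1)) := by ring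
      _ = (n.choose k * k) * (n.choose k * (n - k)) := by rw [← h1, h2]
      _ = n.choose k * n.choose k * (k * (n - k)) := by ring
  have hle : n.choose k * n.choose k * (k * (n - k))
      ≤ n.choose k * n.choose k * ((n - (k-1)) * (k+1)) := by
    apply Nat.mul_le_mul_left
    calc k * (n - k) ≤ (k+1) * (n - (k-1)) := Nat.mul_le_mul (by omega) (by omega)
      _ = (n - (k-1)) * (k+1) := Nat.mul_comm _ _
  have hpos : 0 < (n - (k-1)) * (k+1) := by
    apply Nat.mul_pos <;> omega
  exact Nat.le_of_mul_le_mul_right (key ▸ hle) hpos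

/-- Newton's inequality (normalized with binomial coefficients). -/
lemma newton : ∀ (N : ℕ) (s : Multiset ℝ), Multiset.card s = N → ∀ k, 1 ≤ k → k + 1 ≤ N →
    s.esymm (k-1) * s.esymm (k+1) * (N.choose k : ℝ)^2
      ≤ s.esymm k ^ 2 * (N.choose (k-1) : ℝ) * (N.choose (k+1) : ℝ) := by
  intro N
  induction N using Nat.strong_induction_on with
  | _ N IH =>
    intro s hs k hk1 hk2
    rcases eq_or_lt_of_le hk1 with hk1' | hkge2
    · -- k = 1
      subst hs
      rw [← hk1']
      have h := newton_one s
      simp only [esymm_zero', Nat.choose_one_right, Nat.choose_zero_right, Nat.sub_self]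
      push_cast
      nlinarith [h]
    rcases eq_or_lt_of_le hk2 with htop | hlt
    · -- k + 1 = N : top case
      by_cases hz : (0:ℝ) ∈ s
      · have hprod : s.esymm (k+1) = 0 := by
          rw [← hs] at htop
          rw [htop, esymm_card_eq_prod]
          exact Multiset.prod_eq_zero hz
        rw [hprod]
        have : s.esymm (k-1) * 0 * (N.choose k : ℝ)^2 = 0 := by ring
        rw [this]
        positivity
      · -- all entries nonzero
        have hne : ∀ x ∈ s, x ≠ 0 := fun x hx h0 => hz (h0 ▸ hx)
        set t : Multiset ℝ := s.map (fun x => x⁻¹) with htdef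
        have hct : Multiset.card t = N := by rw [htdef, Multiset.card_map, hs]
        have h1 := newton_one t
        rw [hct] at h1
        have hP : s.prod ≠ 0 := Multiset.prod_ne_zero hz
        have hr1 : t.esymm 1 * s.prod = s.esymm (N - 1) := by
          rw [htdef]; rw [← hs]; exact refl_esymm s hne 1 (by omega)
        have hr2 : t.esymm 2 * s.prod = s.esymm (N - 2) := by
          rw [htdef]; rw [← hs]; exact refl_esymm s hne 2 (by omega)
        have hprod : s.esymm N = s.prod := by rw [← hs]; exact esymm_card_eq_prod s
        -- indices
        have ek1 : k + 1 = N := htop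
        have ekm : k - 1 = N - 2 := by omega
        have ekk : k = N - 1 := by omega
        have hc1 : (N.choose k : ℝ) = (N.choose 1 : ℝ) := by
          rw [ekk]; norm_cast; exact Nat.choose_symm (by omega)
        have hc2 : (N.choose (k-1) : ℝ) = (N.choose 2 : ℝ) := by
          rw [ekm]; norm_cast; exact Nat.choose_symm (by omega)
        have hc3 : (N.choose (k+1) : ℝ) = 1 := by rw [ek1]; norm_cast; exact Nat.choose_self N
        rw [hc1, hc2, hc3, ekm, ek1, ekk, Nat.choose_one_right]
        -- goal : e_{N-2} * e_N * N^2 ≤ e_{N-1}^2 * C(N,2) * 1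
        have hmul := mul_le_mul_of_nonneg_right h1 (sq_nonneg s.prod)
        have eL : (N:ℝ)^2 * t.esymm 2 * s.prod^2 = s.esymm (N-2) * s.esymm N * (N:ℝ)^2 := by
          rw [hprod]
          calc (N:ℝ)^2 * t.esymm 2 * s.prod^2
              = (t.esymm 2 * s.prod) * s.prod * (N:ℝ)^2 := by ring
            _ = s.esymm (N-2) * s.prod * (N:ℝ)^2 := by rw [hr2]
        have eR : (N.choose 2 : ℝ) * t.esymm 1 ^2 * s.prod^2
            = s.esymm (N-1)^2 * (N.choose 2:ℝ) * 1 := by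
          calc (N.choose 2 : ℝ) * t.esymm 1 ^2 * s.prod^2
              = (t.esymm 1 * s.prod)^2 * (N.choose 2:ℝ) * 1 := by ring
            _ = s.esymm (N-1)^2 * (N.choose 2:ℝ) * 1 := by rw [hr1]
        calc s.esymm (N-2) * s.esymm N * (N:ℝ)^2 = (N:ℝ)^2 * t.esymm 2 * s.prod^2 := eL.symm
          _ ≤ (N.choose 2 : ℝ) * t.esymm 1 ^2 * s.prod^2 := by nlinarith [hmul]
          _ = s.esymm (N-1)^2 * (N.choose 2:ℝ) * 1 := eR
    · -- k + 1 < N : derivative step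
      have h2N : 2 ≤ Multiset.card s := by omega
      obtain ⟨t, hct, hrel⟩ := deriv_step s h2N
      rw [hs] at hct hrel
      have hIH := IH (N-1) (by omega) t hct k hk1 (by omega)
      have e1 := hrel (k-1) (by omega)
      have e2 := hrel k (by omega)
      have e3 := hrel (k+1) (by omega)
      set pa : ℝ := ((N - (k-1) : ℕ) : ℝ) with hpa
      set pb : ℝ := ((N - k : ℕ) : ℝ) with hpb
      set pc : ℝ := ((N - (k+1) : ℕ) : ℝ) with hpc
      have hpapos : 0 < pa := by rw [hpa]; exact_mod_cast Nat.sub_pos_of_lt (by omega)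
      have hpbpos : 0 < pb := by rw [hpb]; exact_mod_cast Nat.sub_pos_of_lt (by omega)
      have hpcpos : 0 < pc := by rw [hpc]; exact_mod_cast Nat.sub_pos_of_lt (by omega)
      have hNpos : (0:ℝ) < (N:ℝ) := by exact_mod_cast (by omega : 0 < N)
      have ca := cidR N (k-1) (by omega)
      have cb := cidR N k (by omega)
      have cc := cidR N (k+1) (by omega)
      rw [← hpa] at ca
      rw [← hpb] at cb
      rw [← hpc] at cc
      -- multiply goal by M = pa * pc * pb^2
      have eL : s.esymm (k-1) * s.esymm (k+1) * (N.choose k : ℝ)^2 * (pa * pc * pb^2)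
          = (N:ℝ)^4 * (t.esymm (k-1) * t.esymm (k+1) * ((N-1).choose k : ℝ)^2) := by
        calc s.esymm (k-1) * s.esymm (k+1) * (N.choose k : ℝ)^2 * (pa * pc * pb^2)
            = (pa * s.esymm (k-1)) * (pc * s.esymm (k+1)) * (pb * (N.choose k:ℝ))^2 := by ring
          _ = ((N:ℝ) * t.esymm (k-1)) * ((N:ℝ) * t.esymm (k+1)) * ((N:ℝ) * ((N-1).choose k:ℝ))^2 := by
              rw [← e1, ← e3, cb]
          _ = (N:ℝ)^4 * (t.esymm (k-1) * t.esymm (k+1) * ((N-1).choose k : ℝ)^2) := by ring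
      have eR : s.esymm k ^2 * (N.choose (k-1) : ℝ) * (N.choose (k+1) : ℝ) * (pa * pc * pb^2)
          = (N:ℝ)^4 * (t.esymm k ^2 * ((N-1).choose (k-1) : ℝ) * ((N-1).choose (k+1) : ℝ)) := by
        calc s.esymm k ^2 * (N.choose (k-1) : ℝ) * (N.choose (k+1) : ℝ) * (pa * pc * pb^2)
            = (pb * s.esymm k)^2 * (pa * (N.choose (k-1):ℝ)) * (pc * (N.choose (k+1):ℝ)) := by ring
          _ = ((N:ℝ) * t.esymm k)^2 * ((N:ℝ) * ((N-1).choose (k-1):ℝ)) * ((N:ℝ) * ((N-1).choose (k+1):ℝ)) := by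
              rw [← e2, ca, cc]
          _ = (N:ℝ)^4 * (t.esymm k ^2 * ((N-1).choose (k-1) : ℝ) * ((N-1).choose (k+1) : ℝ)) := by ring
      have hM : 0 < pa * pc * pb^2 := by positivity
      have key : (N:ℝ)^4 * (t.esymm (k-1) * t.esymm (k+1) * ((N-1).choose k : ℝ)^2)
          ≤ (N:ℝ)^4 * (t.esymm k ^2 * ((N-1).choose (k-1) : ℝ) * ((N-1).choose (k+1) : ℝ)) := by
        apply mul_le_mul_of_nonneg_left hIH (by positivity)
      exact le_of_mul_le_mul_right (by linarith [eL, eR, key]) hM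

/-- The Gårding cone condition for a multiset. -/
def Gam (m : ℕ) (s : Multiset ℝ) : Prop := ∀ k, 1 ≤ k → k ≤ m → 0 < s.esymm k

lemma gam_mono {m' m : ℕ} {s : Multiset ℝ} (h : m' ≤ m) (hg : Gam m s) : Gam m' s :=
  fun k hk1 hk2 => hg k hk1 (le_trans hk2 h)

lemma gam_pos0 {m : ℕ} {s : Multiset ℝ} (hg : Gam m s) : ∀ j ≤ m, 0 < s.esymm j := by
  intro j hj
  rcases Nat.eq_zero_or_pos j with rfl | hpos
  · rw [esymm_zero']; norm_num
  · exact hg j hpos hj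

/-- Removal lemma: removing one entry from a vector in Γ_m gives a vector in Γ_{m-1}. -/
lemma gam_removal : ∀ (m : ℕ) (a : ℝ) (s : Multiset ℝ), Gam m (a ::ₘ s) → Gam (m-1) s := by
  intro m
  induction m with
  | zero => intro a s _ k hk1 hk2; omega
  | succ t ih =>
    intro a s hg
    rcases Nat.eq_zero_or_pos t with rfl | htpos
    · intro k hk1 hk2; omega
    -- goal : Gam t s, have Gam (t+1) (a ::ₘ s)
    have hprev : Gam (t-1) s := ih a s (gam_mono (by omega) hg)
    intro k hk1 hk2
    rcases Nat.lt_or_ge k t with hkt | hkt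
    · exact hprev k hk1 (by omega)
    have hkt' : k = t := by omega
    subst hkt'
    -- prove 0 < e_k s by contradiction
    by_contra hcon
    push_neg at hcon
    have hp : 0 < s.esymm (k-1) := gam_pos0 hprev (k-1) (by omega)
    have hco : k - 1 + 1 = k := by omega
    have h1 : 0 < s.esymm k + a * s.esymm (k-1) := by
      have := hg k hk1 (by omega)
      rwa [← hco, esymm_cons, hco] at this
    have h2 : 0 < s.esymm (k+1) + a * s.esymm k := by
      have := hg (k+1) (by omega) (by omega)
      rwa [esymm_cons] at this
    have hng : 0 ≤ -s.esymm k := by linarith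
    have ha : 0 < a := by
      by_contra hA
      push_neg at hA
      have : a * s.esymm (k-1) ≤ 0 := mul_nonpos_of_nonpos_of_nonneg hA (le_of_lt hp)
      linarith
    have s1 : s.esymm k ^ 2 ≤ a * s.esymm (k-1) * (-s.esymm k) := by
      have := mul_le_mul_of_nonneg_right (show -s.esymm k ≤ a * s.esymm (k-1) by linarith) hng
      nlinarith [this]
    have s2 : a * s.esymm (k-1) * (-s.esymm k) < s.esymm (k-1) * s.esymm (k+1) := by
      have := mul_lt_mul_of_pos_right (show -(a * s.esymm k) < s.esymm (k+1) by linarith) hp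
      nlinarith [this]
    have P : s.esymm k ^ 2 < s.esymm (k-1) * s.esymm (k+1) := lt_of_le_of_lt s1 s2
    rcases Nat.lt_or_ge (Multiset.card s) (k+1) with hcard | hcard
    · -- e_{k+1} s = 0
      have hz : s.esymm (k+1) = 0 := esymm_of_card_lt hcard
      rw [hz, mul_zero] at P
      nlinarith [P, sq_nonneg (s.esymm k)]
    · have hN := newton (Multiset.card s) s rfl k hk1 hcard
      have hLC : ((Multiset.card s).choose (k-1) * (Multiset.card s).choose (k+1) : ℝ)
          ≤ ((Multiset.card s).choose k : ℝ) * ((Multiset.card s).choose k : ℝ) := by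
        exact_mod_cast choose_logconcave (Multiset.card s) k hk1 hcard
      have hCpos : (0:ℝ) < ((Multiset.card s).choose k : ℝ) := by
        exact_mod_cast Nat.choose_pos (by omega)
      nlinarith [hN, hLC, P, sq_nonneg (s.esymm k), hCpos,
        mul_lt_mul_of_pos_right P (mul_pos hCpos hCpos),
        mul_le_mul_of_nonneg_left hLC (sq_nonneg (s.esymm k))]

lemma exists_max (s : Multiset ℝ) (h : s ≠ 0) :
    ∃ a t, s = a ::ₘ t ∧ ∀ x ∈ t, x ≤ a := by
  induction s using Multiset.induction with
  | empty => exact absurd rfl h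
  | cons a s ih =>
    rcases eq_or_ne s 0 with rfl | hs
    · exact ⟨a, 0, rfl, by simp⟩
    obtain ⟨b, t, rfl, hb⟩ := ih hs
    rcases le_total a b with hab | hab
    · refine ⟨b, a ::ₘ t, Multiset.cons_swap a b t, ?_⟩
      intro x hx
      rcases Multiset.mem_cons.1 hx with rfl | hx
      · exact hab
      · exact hb x hx
    · refine ⟨a, b ::ₘ t, rfl, ?_⟩
      intro x hx
      rcases Multiset.mem_cons.1 hx with rfl | hx
      · exact hab
      · exact le_trans (hb x hx) hab

lemma theta_bound : ∀ (N m : ℕ), 2 ≤ m → ∀ (a : ℝ) (s : Multiset ℝ), Multiset.card s = N →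
    (∀ x ∈ s, x ≤ a) → Gam m (a ::ₘ s) →
    (a ::ₘ s).esymm m ≤ ((N + 2 - m : ℕ) : ℝ) * a * s.esymm (m-1) := by
  intro N
  induction N using Nat.strong_induction_on with
  | _ N IH =>
    intro m hm a s hcard hmax hg
    have hco : m - 1 + 1 = m := by omega
    have hrm : Gam (m-1) s := gam_removal m a s hg
    have hem1 : 0 < s.esymm (m-1) := gam_pos0 hrm (m-1) le_rfl
    have hNm : m - 1 ≤ N := by
      by_contra hc
      push_neg at hc
      have : s.esymm (m-1) = 0 := esymm_of_card_lt (by omega)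
      linarith
    have ha : 0 < a := by
      have h1 : 0 < (a ::ₘ s).esymm 1 := hg 1 le_rfl (by omega)
      rw [esymm_one', Multiset.sum_cons] at h1
      have hsum : s.sum ≤ (N : ℝ) * a := by
        have := Multiset.sum_le_card_nsmul s a hmax
        rwa [hcard, nsmul_eq_mul] at this
      nlinarith [h1, hsum, Nat.cast_nonneg (α := ℝ) N]
    have hcons : (a ::ₘ s).esymm m = s.esymm m + a * s.esymm (m-1) := by
      rw [← hco, esymm_cons, hco]
    have hcge1 : (1:ℝ) ≤ ((N + 2 - m : ℕ) : ℝ) := by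
      have : 1 ≤ N + 2 - m := by omega
      exact_mod_cast this
    rcases le_or_gt (s.esymm m) 0 with he | he
    · rw [hcons]
      nlinarith [mul_pos ha hem1]
    · -- s itself is in Gam m
      have hgs : Gam m s := by
        intro k hk1 hk2
        rcases Nat.lt_or_ge k m with hkm | hkm
        · exact hrm k hk1 (by omega)
        · have : k = m := by omega
          subst this; exact he
      have hsne : s ≠ 0 := by
        intro h0
        rw [h0] at he
        have : (0:Multiset ℝ).esymm m = 0 := esymm_of_card_lt (by simp; omega)
        linarith
      obtain ⟨b, t, rfl, hbmax⟩ := exists_max s hsne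
      have hcardt : Multiset.card t = N - 1 := by
        have := hcard; simp only [Multiset.card_cons] at this; omega
      have hN1 : 1 ≤ N := by
        have := hcard; simp only [Multiset.card_cons] at this; omega
      have hIH := IH (N-1) (by omega) m hm b t hcardt hbmax hgs
      have hb : 0 < b := by
        have h1 : 0 < (b ::ₘ t).esymm 1 := hgs 1 le_rfl (by omega)
        rw [esymm_one', Multiset.sum_cons] at h1
        have hsum : t.sum ≤ ((N-1 : ℕ) : ℝ) * b := by
          have := Multiset.sum_le_card_nsmul t b hbmax
          rwa [hcardt, nsmul_eq_mul] at this
        nlinarith [h1, hsum, Nat.cast_nonneg (α := ℝ) (N-1)]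
      have hba : b ≤ a := hmax b (Multiset.mem_cons_self b t)
      have hrmt : Gam (m-2) t := by
        have : Gam (m-1) (b ::ₘ t) := hrm
        have h2 := gam_removal (m-1) b t this
        have : m - 1 - 1 = m - 2 := by omega
        rwa [this] at h2
      have het2 : 0 ≤ t.esymm (m-2) := le_of_lt (gam_pos0 hrmt (m-2) le_rfl)
      have hemt : 0 < t.esymm (m-1) := by
        have := gam_removal m b t hgs
        exact gam_pos0 this (m-1) le_rfl
      have hmono : t.esymm (m-1) ≤ (b ::ₘ t).esymm (m-1) := by
        have hco2 : m - 2 + 1 = m - 1 := by omega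
        rw [← hco2, esymm_cons, hco2]
        nlinarith [mul_nonneg (le_of_lt hb) het2]
      -- combine
      have hcc : ((N - 1 + 2 - m : ℕ) : ℝ) + 1 = ((N + 2 - m : ℕ) : ℝ) := by
        have : (N - 1 + 2 - m) + 1 = N + 2 - m := by omega
        exact_mod_cast congrArg (Nat.cast (R := ℝ)) this
      have step : (b ::ₘ t).esymm m ≤ ((N - 1 + 2 - m : ℕ) : ℝ) * a * (b ::ₘ t).esymm (m-1) := by
        calc (b ::ₘ t).esymm m ≤ ((N - 1 + 2 - m : ℕ) : ℝ) * b * t.esymm (m-1) := hIH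
          _ ≤ ((N - 1 + 2 - m : ℕ) : ℝ) * a * (b ::ₘ t).esymm (m-1) := by
              have hc0 : (0:ℝ) ≤ ((N - 1 + 2 - m : ℕ) : ℝ) := Nat.cast_nonneg _
              have h1 : b * t.esymm (m-1) ≤ a * (b ::ₘ t).esymm (m-1) := by
                calc b * t.esymm (m-1) ≤ a * t.esymm (m-1) :=
                      mul_le_mul_of_nonneg_right hba (le_of_lt hemt)
                  _ ≤ a * (b ::ₘ t).esymm (m-1) :=
                      mul_le_mul_of_nonneg_left hmono (le_of_lt ha)
              calc ((N - 1 + 2 - m : ℕ) : ℝ) * b * t.esymm (m-1)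
                  = ((N - 1 + 2 - m : ℕ) : ℝ) * (b * t.esymm (m-1)) := by ring
                _ ≤ ((N - 1 + 2 - m : ℕ) : ℝ) * (a * (b ::ₘ t).esymm (m-1)) :=
                    mul_le_mul_of_nonneg_left h1 hc0
                _ = ((N - 1 + 2 - m : ℕ) : ℝ) * a * (b ::ₘ t).esymm (m-1) := by ring
      rw [hcons]
      nlinarith [step, mul_pos ha hem1, hcc]

end NA

namespace NA

variable {n : ℕ} (lam : Fin n → ℝ)

lemma S_eq (k : ℕ) : S n k lam = ((Finset.univ : Finset (Fin n)).val.map lam).esymm k := by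
  rw [S, Finset.esymm_map_val]

lemma SRes_eq (T : Finset (Fin n)) (k : ℕ) :
    SRes n T k lam = (T.val.map lam).esymm k := by
  rw [SRes, Finset.esymm_map_val]

lemma split_finset (T : Finset (Fin n)) (i : Fin n) (hi : i ∈ T) :
    T.val.map lam = lam i ::ₘ (T.erase i).val.map lam := by
  rw [Finset.erase_val, ← Multiset.map_cons, Multiset.cons_erase (Finset.mem_val.mpr hi)]

end NA

theorem stmt7 (n m : ℕ) (hm : 2 ≤ m) (hmn : m ≤ n) :
    ∃ θ : ℝ, 0 < θ ∧ ∀ lam ∈ GammaCone n m,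
      (∀ i j : Fin n, i ≤ j → lam j ≤ lam i) →
      (∀ i : Fin n, 0 < S n m lam / SRes n (Finset.univ \ {i}) (m - 1) lam) ∧
      (∀ i j : Fin n, i ≤ j →
        S n m lam / SRes n (Finset.univ \ {j}) (m - 1) lam ≤
          S n m lam / SRes n (Finset.univ \ {i}) (m - 1) lam) ∧
      (∀ i : Fin n,
        S n m lam / SRes n (Finset.univ \ {i}) (m - 1) lam ≤ S n 1 lam / θ) := by
  have hn2 : 2 ≤ n := le_trans hm hmn
  have hcpos : (0:ℝ) < ((n + 1 - m : ℕ) : ℝ) := by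
    have : 1 ≤ n + 1 - m := by omega
    exact_mod_cast Nat.lt_of_lt_of_le Nat.zero_lt_one this
  refine ⟨((n + 1 - m : ℕ) : ℝ)⁻¹, inv_pos.mpr hcpos, ?_⟩
  intro lam hlam hord
  set u := ((Finset.univ : Finset (Fin n)).val.map lam) with hu
  set M : Fin n → Multiset ℝ := fun i => ((Finset.univ.erase i).val.map lam) with hM
  have hsplit : ∀ i : Fin n, u = lam i ::ₘ M i := fun i =>
    NA.split_finset lam Finset.univ i (Finset.mem_univ i)
  have hG : NA.Gam m u := by
    intro k hk1 hk2
    have := hlam k hk1 hk2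
    rwa [NA.S_eq] at this
  have hGi : ∀ i : Fin n, NA.Gam (m-1) (M i) := by
    intro i
    apply NA.gam_removal m (lam i) (M i)
    rw [← hsplit i]; exact hG
  have hpos : ∀ i : Fin n, 0 < (M i).esymm (m-1) := fun i =>
    NA.gam_pos0 (hGi i) (m-1) le_rfl
  have hSRes : ∀ i : Fin n, SRes n (Finset.univ \ {i}) (m-1) lam = (M i).esymm (m-1) := by
    intro i
    rw [Finset.sdiff_singleton_eq_erase, NA.SRes_eq]
  have hSm : 0 < S n m lam := hlam m (by omega) le_rfl
  -- monotonicity statement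
  have hmono : ∀ i j : Fin n, i ≤ j → (M i).esymm (m-1) ≤ (M j).esymm (m-1) := by
    intro i j hij
    rcases eq_or_ne i j with rfl | hne
    · exact le_rfl
    have hji : j ∈ Finset.univ.erase i := Finset.mem_erase.mpr ⟨Ne.symm hne, Finset.mem_univ j⟩
    have hij' : i ∈ Finset.univ.erase j := Finset.mem_erase.mpr ⟨hne, Finset.mem_univ i⟩
    have hMi : M i = lam j ::ₘ ((Finset.univ.erase i).erase j).val.map lam :=
      NA.split_finset lam _ j hji
    have hMj : M j = lam i ::ₘ ((Finset.univ.erase j).erase i).val.map lam :=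
      NA.split_finset lam _ i hij'
    have hcomm : ((Finset.univ.erase j).erase i) = ((Finset.univ.erase i).erase j) :=
      Finset.erase_right_comm
    rw [hcomm] at hMj
    set w := ((Finset.univ.erase i).erase j).val.map lam with hw
    have hGw : NA.Gam (m-2) w := by
      have h1 : NA.Gam (m-1) (lam j ::ₘ w) := by rw [← hMi]; exact hGi i
      have h2 := NA.gam_removal (m-1) (lam j) w h1
      have he : m - 1 - 1 = m - 2 := by omega
      rwa [he] at h2
    have hw0 : 0 ≤ w.esymm (m-2) := le_of_lt (NA.gam_pos0 hGw (m-2) le_rfl)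
    have hco : m - 2 + 1 = m - 1 := by omega
    have hlij : lam j ≤ lam i := hord i j hij
    rw [hMi, hMj, ← hco, NA.esymm_cons, NA.esymm_cons]
    nlinarith [mul_le_mul_of_nonneg_right hlij hw0]
  refine ⟨?_, ?_, ?_⟩
  · intro i
    rw [hSRes i]
    exact div_pos hSm (hpos i)
  · intro i j hij
    rw [hSRes i, hSRes j]
    exact div_le_div_of_nonneg_left (le_of_lt hSm) (hpos i) (hmono i j hij)
  · intro i
    set i0 : Fin n := ⟨0, by omega⟩ with hi0
    have hi0le : i0 ≤ i := by
      simp only [Fin.le_def]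
      exact Nat.zero_le _
    have step1 : S n m lam / SRes n (Finset.univ \ {i}) (m-1) lam
        ≤ S n m lam / SRes n (Finset.univ \ {i0}) (m-1) lam := by
      rw [hSRes i, hSRes i0]
      exact div_le_div_of_nonneg_left (le_of_lt hSm) (hpos i0) (hmono i0 i hi0le)
    refine le_trans step1 ?_
    -- bound S_m / e(M i0) ≤ S_1 * (n+1-m)
    have hmax : ∀ x ∈ M i0, x ≤ lam i0 := by
      intro x hx
      obtain ⟨j, hj, rfl⟩ := Multiset.mem_map.1 hx
      exact hord i0 j (by simp only [Fin.le_def]; exact Nat.zero_le _)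
    have hcard : Multiset.card (M i0) = n - 1 := by
      rw [hM]
      simp [Multiset.card_map, Finset.card_erase_of_mem (Finset.mem_univ i0)]
    have htb := NA.theta_bound (n-1) m hm (lam i0) (M i0) hcard hmax
      (by rw [← hsplit i0]; exact hG)
    rw [← hsplit i0] at htb
    -- lam i0 ≤ S 1
    have hS1 : 0 < S n 1 lam := hlam 1 le_rfl (by omega)
    have hS2 : 0 < S n 2 lam := hlam 2 (by omega) hm
    have hS1e : S n 1 lam = u.esymm 1 := NA.S_eq lam 1
    have hS2e : S n 2 lam = u.esymm 2 := NA.S_eq lam 2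
    have hQ : (lam i0)^2 ≤ (u.map (fun x => x^2)).sum := by
      rw [hsplit i0, Multiset.map_cons, Multiset.sum_cons]
      have : 0 ≤ ((M i0).map (fun x => x^2)).sum := by
        apply Multiset.sum_nonneg
        intro x hx
        obtain ⟨y, _, rfl⟩ := Multiset.mem_map.1 hx
        positivity
      linarith
    have hl0 : lam i0 ≤ S n 1 lam := by
      have he1 := NA.e1_sq u
      rw [← hS1e, ← hS2e] at he1
      nlinarith [hS1, hS2, hQ, he1]
    have hcc : ((n - 1 + 2 - m : ℕ) : ℝ) = ((n + 1 - m : ℕ) : ℝ) := by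
      have : n - 1 + 2 - m = n + 1 - m := by omega
      exact_mod_cast congrArg (Nat.cast (R := ℝ)) this
    rw [hcc] at htb
    -- htb : u.esymm m ≤ (n+1-m) * lam i0 * (M i0).esymm (m-1)
    rw [hSRes i0, div_inv_eq_mul, div_le_iff₀ (hpos i0)]
    have hSme : S n m lam = u.esymm m := NA.S_eq lam m
    rw [hSme]
    nlinarith [htb, mul_nonneg (mul_nonneg hcpos.le (hpos i0).le) (sub_nonneg.mpr hl0)]
end

section
/- (Superadditivity of S_m on the cone) For all λ, μ ∈ Γ_m, S_m(λ + μ) ≥ S_m(λ). -/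
open Finset
open Polynomial

namespace MyES
open Multiset

lemma esymm_zero' (s : Multiset ℝ) : s.esymm 0 = 1 := by
  simp [Multiset.esymm]

lemma esymm_cons (a : ℝ) (s : Multiset ℝ) (k : ℕ) :
    (a ::ₘ s).esymm (k+1) = s.esymm (k+1) + a * s.esymm k := by
  simp only [Multiset.esymm, Multiset.powersetCard_cons, Multiset.map_add, Multiset.sum_add,
    Multiset.map_map]
  congr 1
  rw [Multiset.sum_map_mul_left.symm]
  congr 1
  ext t
  simp [Multiset.prod_cons]

lemma esymm_eq_zero (s : Multiset ℝ) (k : ℕ) (h : Multiset.card s < k) : s.esymm k = 0 := by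
  simp [Multiset.esymm, Multiset.powersetCard_eq_empty _ h]

lemma esymm_card (s : Multiset ℝ) : s.esymm (Multiset.card s) = s.prod := by
  induction s using Multiset.induction with
  | empty => simp [esymm_zero']
  | cons a s ih =>
    rw [Multiset.card_cons, esymm_cons, esymm_eq_zero s _ (Nat.lt_succ_self _), ih,
      Multiset.prod_cons, zero_add]

lemma esymm_one' (s : Multiset ℝ) : s.esymm 1 = s.sum := by
  simp [Multiset.esymm, Multiset.powersetCard_one, Multiset.map_map, Function.comp_def]

/-- sum of squares identity: e1^2 = sum of squares + 2 e2 -/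
lemma esymm_sq_identity (s : Multiset ℝ) :
    (s.esymm 1)^2 = (s.map (fun a => a^2)).sum + 2 * s.esymm 2 := by
  induction s using Multiset.induction with
  | empty => rw [esymm_eq_zero 0 1 (by simp), esymm_eq_zero 0 2 (by simp)]; simp
  | cons a s ih =>
    rw [show (2:ℕ) = 1 + 1 from rfl] at *
    rw [esymm_cons, esymm_cons, Multiset.map_cons, Multiset.sum_cons, esymm_zero'] at *
    rw [esymm_one'] at *
    ring_nf
    ring_nf at ih
    nlinarith [ih]

/-- Cauchy–Schwarz for multisets -/
lemma sq_sum_le_card_mul_sum_sq (s : Multiset ℝ) :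
    s.sum ^ 2 ≤ (Multiset.card s) * (s.map (fun a => a^2)).sum := by
  induction s using Multiset.induction with
  | empty => simp
  | cons a s ih =>
    rw [Multiset.sum_cons, Multiset.card_cons, Multiset.map_cons, Multiset.sum_cons]
    push_cast
    rcases Nat.eq_zero_or_pos (Multiset.card s) with h | h
    · have : s = 0 := Multiset.card_eq_zero.mp h
      subst this; simp
    · have hN : (1:ℝ) ≤ (Multiset.card s : ℝ) := by exact_mod_cast h
      nlinarith [sq_nonneg ((Multiset.card s : ℝ) * a - s.sum), ih,
        mul_pos (lt_of_lt_of_le zero_lt_one hN) (lt_of_lt_of_le zero_lt_one hN)]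


/-- inverse map identity -/
lemma esymm_inv (s : Multiset ℝ) (hs : ∀ a ∈ s, a ≠ 0) :
    ∀ k ≤ Multiset.card s, s.prod * (s.map (fun a => a⁻¹)).esymm k
      = s.esymm (Multiset.card s - k) := by
  induction s using Multiset.induction with
  | empty =>
    intro k hk
    have : k = 0 := Nat.le_zero.mp hk
    subst this; simp [esymm_zero']
  | cons a t ih =>
    intro k hk
    have ha : a ≠ 0 := hs a (Multiset.mem_cons_self a t)
    have ht : ∀ b ∈ t, b ≠ 0 := fun b hb => hs b (Multiset.mem_cons_of_mem hb)
    rw [Multiset.card_cons] at hk ⊢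
    rcases Nat.eq_zero_or_pos k with rfl | hkpos
    · rw [esymm_zero', Nat.sub_zero, mul_one, ← Multiset.card_cons a t, esymm_card]
    obtain ⟨k, rfl⟩ : ∃ k', k = k' + 1 := ⟨k - 1, by omega⟩
    rw [Multiset.map_cons, Multiset.prod_cons, esymm_cons]
    rcases Nat.lt_or_ge k (Multiset.card t) with hlt | hge
    · have h1 : k + 1 ≤ Multiset.card t := hlt
      have e1 := ih ht (k+1) h1
      have e2 := ih ht k (le_of_lt hlt)
      have hrw : Multiset.card t + 1 - (k + 1) = (Multiset.card t - (k+1)) + 1 := by omega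
      rw [hrw, esymm_cons]
      have hrw2 : Multiset.card t - (k + 1) + 1 = Multiset.card t - k := by omega
      rw [hrw2]
      calc a * t.prod * ((Multiset.map (fun a => a⁻¹) t).esymm (k+1)
              + a⁻¹ * (Multiset.map (fun a => a⁻¹) t).esymm k)
          = a * (t.prod * (Multiset.map (fun a => a⁻¹) t).esymm (k+1))
            + (a * a⁻¹) * (t.prod * (Multiset.map (fun a => a⁻¹) t).esymm k) := by ring
        _ = a * t.esymm (Multiset.card t - (k+1)) + 1 * t.esymm (Multiset.card t - k) := by
              rw [e1, e2, mul_inv_cancel₀ ha]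
        _ = t.esymm (Multiset.card t - (k+1) + 1) + a * t.esymm (Multiset.card t - (k+1)) := by
              rw [hrw2]; ring
        _ = t.esymm (Multiset.card t - k) + a * t.esymm (Multiset.card t - (k+1)) := by
              rw [hrw2]
    · have hk1 : k = Multiset.card t := by omega
      subst hk1
      rw [Nat.sub_self, esymm_zero',
        esymm_eq_zero (Multiset.map (fun a => a⁻¹) t) _ (by rw [Multiset.card_map]; omega)]
      have e2 := ih ht (Multiset.card t) le_rfl
      rw [Nat.sub_self, esymm_zero'] at e2
      calc a * t.prod * (0 + a⁻¹ * (Multiset.map (fun a => a⁻¹) t).esymm (Multiset.card t))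
          = (a * a⁻¹) * (t.prod * (Multiset.map (fun a => a⁻¹) t).esymm (Multiset.card t)) := by ring
        _ = 1 := by rw [mul_inv_cancel₀ ha, e2, one_mul]


lemma exists_deriv_roots (s : Multiset ℝ) (hs : 1 ≤ Multiset.card s) :
    ∃ t : Multiset ℝ, Multiset.card t = Multiset.card s - 1 ∧
      ∀ j ≤ Multiset.card s - 1,
        (Multiset.card s : ℝ) * t.esymm j = ((Multiset.card s - j : ℕ) : ℝ) * s.esymm j := by
  classical
  set N := Multiset.card s with hN
  set p : ℝ[X] := (s.map (fun a => X + C a)).prod with hp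
  have hmonset : ∀ f ∈ s.map (fun a => (X + C a : ℝ[X])), Monic f := by
    intro f hf
    obtain ⟨a, _, rfl⟩ := Multiset.mem_map.mp hf
    exact monic_X_add_C a
  have hmon : p.Monic := monic_multiset_prod_of_monic s _ (fun a _ => monic_X_add_C a)
  have hdeg : p.natDegree = N := by
    rw [hp, natDegree_multiset_prod_of_monic _ hmonset]
    simp [Function.comp_def, hN]
  have hroots : p.roots = s.map (fun a => -a) := by
    have : p = ((s.map (fun a => -a)).map (fun a => X - C a)).prod := by
      rw [hp, Multiset.map_map]
      congr 1
      apply Multiset.map_congr rfl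
      intro a _
      simp [sub_neg_eq_add]
    rw [this, roots_multiset_prod_X_sub_C]
  set q := derivative p with hq
  have hNR : (0:ℝ) < (N:ℝ) := by exact_mod_cast hs
  have hqtop : q.coeff (N-1) = N := by
    rw [hq, coeff_derivative, show N - 1 + 1 = N by omega, ← hdeg, hmon.coeff_natDegree, one_mul,
      hdeg]
    have : ((N - 1 : ℕ) : ℝ) = (N:ℝ) - 1 := by
      push_cast [Nat.cast_sub hs]; ring
    rw [this]; ring
  have hqne : q ≠ 0 := fun h => by simp [h] at hqtop; exact absurd hqtop.symm (ne_of_gt hNR)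
  have hqdeg_le : q.natDegree ≤ N - 1 := hdeg ▸ natDegree_derivative_le p
  have hqdeg_ge : N - 1 ≤ q.natDegree :=
    le_natDegree_of_ne_zero (by rw [hqtop]; exact ne_of_gt hNR)
  have hqdeg : q.natDegree = N - 1 := le_antisymm hqdeg_le hqdeg_ge
  have hcardp : Multiset.card p.roots = N := by rw [hroots, Multiset.card_map]
  have hcardq : Multiset.card q.roots = N - 1 := by
    have h1 := Polynomial.card_roots_le_derivative p
    have h2 := Polynomial.card_roots' q
    rw [hcardp] at h1
    rw [hqdeg] at h2
    have h1' : N ≤ Multiset.card q.roots + 1 := h1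
    omega
  have hsplits : Splits q := (splits_iff_card_roots).mpr (by rw [hcardq, hqdeg])
  have hlead : q.leadingCoeff = N := by rw [leadingCoeff, hqdeg, hqtop]
  set t : Multiset ℝ := q.roots.map (fun a => -a) with htdef
  have hcardt : Multiset.card t = N - 1 := by rw [htdef, Multiset.card_map, hcardq]
  have hqprod : q = C (N:ℝ) * (t.map (fun a => X + C a)).prod := by
    have := hsplits.eq_prod_roots
    rw [hlead] at this
    rw [this]
    congr 1
    rw [htdef, Multiset.map_map]
    refine congrArg Multiset.prod (Multiset.map_congr rfl ?_)
    intro a _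
    show (X - C a) = X + C (-a)
    rw [map_neg, sub_eq_add_neg]
  refine ⟨t, hcardt, ?_⟩
  intro j hj
  have hk : N - 1 - j ≤ Multiset.card t := by omega
  have hv1 : q.coeff (N-1-j) = (N:ℝ) * t.esymm j := by
    rw [hqprod, coeff_C_mul, Multiset.prod_X_add_C_coeff t hk, hcardt,
      show N - 1 - (N - 1 - j) = j by omega]
  have hv2 : q.coeff (N-1-j) = ((N - j : ℕ):ℝ) * s.esymm j := by
    rw [hq, coeff_derivative, show N - 1 - j + 1 = N - j by omega,
      Multiset.prod_X_add_C_coeff s (show N - j ≤ Multiset.card s by omega), ← hN,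
      show N - (N - j) = j by omega]
    have : ((N - j : ℕ) : ℝ) = (N:ℝ) - j := by
      push_cast [Nat.cast_sub (show j ≤ N by omega)]; ring
    rw [this]
    have : ((N - 1 - j : ℕ) : ℝ) = (N:ℝ) - 1 - j := by
      rw [Nat.sub_sub, Nat.cast_sub (show 1 + j ≤ N by omega)]
      push_cast; ring
    rw [this]; ring
  rw [← hv1, hv2]

lemma newton_bottom (v : Multiset ℝ) :
    (Multiset.card v : ℝ)^2 * v.esymm 2 ≤ (v.esymm 1)^2 * (((Multiset.card v).choose 2 : ℕ) : ℝ) := by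
  have hid := esymm_sq_identity v
  have hcs := MyES.sq_sum_le_card_mul_sum_sq v
  rw [← esymm_one'] at hcs
  have hch : (((Multiset.card v).choose 2 : ℕ) : ℝ)
      = (Multiset.card v : ℝ) * ((Multiset.card v : ℝ) - 1) / 2 := by
    rcases Nat.eq_zero_or_pos (Multiset.card v) with h | h
    · simp [h]
    · rw [Nat.choose_two_right]
      rw [Nat.cast_div]
      · rw [Nat.cast_mul, Nat.cast_sub h]; push_cast; ring
      · exact Nat.even_mul_pred_self _ |>.two_dvd
      · norm_num
  rw [hch]
  have hQ : 0 ≤ (v.map (fun a => a^2)).sum := by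
    apply Multiset.sum_nonneg; intro x hx
    obtain ⟨a, _, rfl⟩ := Multiset.mem_map.mp hx
    positivity
  rcases Nat.eq_zero_or_pos (Multiset.card v) with h | h
  · have hv : v = 0 := Multiset.card_eq_zero.mp h
    subst hv; simp [Multiset.esymm]
  · have hN : (1:ℝ) ≤ (Multiset.card v : ℝ) := by exact_mod_cast h
    nlinarith [hcs, hid, hN]

lemma cast_choose_identity (N j : ℕ) (h : j + 1 ≤ N) :
    (N:ℝ) * ((N-1).choose j : ℕ) = ((N:ℝ) - j) * (N.choose j : ℕ) := by
  have h1 : N * (N-1).choose j = N.choose (j+1) * (j+1) := by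
    have := Nat.add_one_mul_choose_eq (N-1) j
    rwa [Nat.sub_add_cancel (by omega : 1 ≤ N)] at this
  have h2 : N.choose (j+1) * (j+1) = N.choose j * (N - j) := Nat.choose_succ_right_eq N j
  have h3 : N * (N-1).choose j = N.choose j * (N - j) := h1.trans h2
  have := congrArg (fun x : ℕ => (x : ℝ)) h3
  push_cast [Nat.cast_sub (by omega : j ≤ N)] at this
  linarith [this]

theorem newton : ∀ (N : ℕ) (s : Multiset ℝ), Multiset.card s = N → ∀ i : ℕ, i + 2 ≤ N →
    s.esymm i * s.esymm (i+2) * ((N.choose (i+1) : ℕ) : ℝ)^2 ≤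
    (s.esymm (i+1))^2 * (((N.choose i : ℕ) : ℝ) * ((N.choose (i+2) : ℕ) : ℝ)) := by
  intro N
  induction N using Nat.strong_induction_on with
  | _ N ih =>
  intro s hcard i hi
  rcases lt_or_eq_of_le hi with hlt | heq
  · -- derivative case i + 2 < N
    obtain ⟨t, hct, he⟩ := exists_deriv_roots s (by omega)
    rw [hcard] at hct he
    have Ei := he i (by omega)
    have Ei1 := he (i+1) (by omega)
    have Ei2 := he (i+2) (by omega)
    have IH := ih (N-1) (by omega) t hct i (by omega)
    have hNj : ∀ j : ℕ, j ≤ N → ((N - j : ℕ) : ℝ) = (N:ℝ) - j := by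
      intro j hj; rw [Nat.cast_sub hj]
    rw [hNj i (by omega)] at Ei
    rw [hNj (i+1) (by omega)] at Ei1
    rw [hNj (i+2) (by omega)] at Ei2
    push_cast at Ei1 Ei2
    have Chi := cast_choose_identity N i (by omega)
    have Chi1 := cast_choose_identity N (i+1) (by omega)
    have Chi2 := cast_choose_identity N (i+2) (by omega)
    push_cast at Chi1 Chi2
    set a : ℝ := (N:ℝ) - i with hadef
    set b : ℝ := (N:ℝ) - ((i:ℝ) + 1) with hbdef
    set c : ℝ := (N:ℝ) - ((i:ℝ) + 2) with hcdef
    have hNn : (i:ℝ) + 2 < (N:ℝ) := by exact_mod_cast hlt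
    have hapos : 0 < a := by rw [hadef]; linarith
    have hbpos : 0 < b := by rw [hbdef]; linarith
    have hcpos : 0 < c := by rw [hcdef]; linarith
    have IH4 := mul_le_mul_of_nonneg_left IH (show (0:ℝ) ≤ (N:ℝ)^4 by positivity)
    have LHS4 : (N:ℝ)^4 * (t.esymm i * t.esymm (i+2) * (((N-1).choose (i+1) : ℕ) : ℝ)^2)
        = ((N:ℝ) * t.esymm i) * ((N:ℝ) * t.esymm (i+2)) * ((N:ℝ) * (((N-1).choose (i+1) : ℕ):ℝ))^2 := by
      ring
    have RHS4 : (N:ℝ)^4 * ((t.esymm (i+1))^2 * ((((N-1).choose i : ℕ):ℝ) * (((N-1).choose (i+2) : ℕ):ℝ)))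
        = ((N:ℝ) * t.esymm (i+1))^2 * (((N:ℝ) * (((N-1).choose i : ℕ):ℝ)) * ((N:ℝ) * (((N-1).choose (i+2) : ℕ):ℝ))) := by
      ring
    rw [LHS4, RHS4, Ei, Ei1, Ei2, Chi, Chi1, Chi2] at IH4
    -- IH4 : (a * e_i s) * (c * e_{i+2} s) * (b * Ci1)^2 ≤ (b * e_{i+1} s)^2 * ((a * Ci) * (c * Ci2))
    have key : (a * c * b^2) * (s.esymm i * s.esymm (i+2) * ((N.choose (i+1) : ℕ) : ℝ)^2)
        ≤ (a * c * b^2) * ((s.esymm (i+1))^2 * (((N.choose i : ℕ) : ℝ) * ((N.choose (i+2) : ℕ) : ℝ))) := by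
      calc (a * c * b^2) * (s.esymm i * s.esymm (i+2) * ((N.choose (i+1) : ℕ) : ℝ)^2)
          = (a * s.esymm i) * (c * s.esymm (i+2)) * (b * ((N.choose (i+1) : ℕ) : ℝ))^2 := by ring
        _ ≤ (b * s.esymm (i+1))^2 * ((a * ((N.choose i : ℕ):ℝ)) * (c * ((N.choose (i+2) : ℕ):ℝ))) := IH4
        _ = (a * c * b^2) * ((s.esymm (i+1))^2 * (((N.choose i : ℕ) : ℝ) * ((N.choose (i+2) : ℕ) : ℝ))) := by ring
    exact le_of_mul_le_mul_left key (by positivity)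
  · -- top case i + 2 = N
    subst hcard
    by_cases hzero : (0:ℝ) ∈ s
    · have hprod : s.esymm (i+2) = 0 := by
        rw [heq, esymm_card]
        exact Multiset.prod_eq_zero hzero
      rw [hprod]
      have : s.esymm i * 0 * ((Multiset.card s).choose (i+1) : ℝ)^2 = 0 := by ring
      rw [this]
      positivity
    · have hne : ∀ a ∈ s, a ≠ 0 := fun a ha h0 => hzero (h0 ▸ ha)
      set N := Multiset.card s with hN
      have inv := esymm_inv s hne
      have h0' := inv 0 (by omega)
      have h1' := inv 1 (by omega)
      have h2' := inv 2 (by omega)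
      rw [esymm_zero', mul_one] at h0'
      rw [show N - 0 = i + 2 by omega] at h0'
      rw [show N - 1 = i + 1 by omega] at h1'
      rw [show N - 2 = i by omega] at h2'
      have hb := newton_bottom (s.map (fun a : ℝ => a⁻¹))
      rw [Multiset.card_map, ← hN] at hb
      have hc1 : (N.choose (i+1) : ℕ) = N := by
        rw [show i + 1 = N - 1 by omega, Nat.choose_symm (by omega : 1 ≤ N),
          Nat.choose_one_right]
      have hc0 : (N.choose i : ℕ) = N.choose 2 := by
        rw [show i = N - 2 by omega, Nat.choose_symm (by omega : 2 ≤ N)]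
      have hc2 : (N.choose (i+2) : ℕ) = 1 := by
        rw [show i + 2 = N by omega, Nat.choose_self]
      rw [hc1, hc0, hc2]
      calc s.esymm i * s.esymm (i+2) * ((N:ℕ):ℝ)^2
          = s.prod^2 * (((N:ℕ):ℝ)^2 * (s.map (fun a : ℝ => a⁻¹)).esymm 2) := by
            rw [← h0', ← h2']; ring
        _ ≤ s.prod^2 * (((s.map (fun a : ℝ => a⁻¹)).esymm 1)^2 * ((N.choose 2 : ℕ):ℝ)) :=
            mul_le_mul_of_nonneg_left hb (sq_nonneg _)
        _ = (s.esymm (i+1))^2 * (((N.choose 2 : ℕ):ℝ) * ((1:ℕ):ℝ)) := by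
            rw [← h1']; push_cast; ring
end MyES

namespace MyES
open Multiset
variable {n : ℕ}

lemma sres_eq_esymm (T : Finset (Fin n)) (k : ℕ) (lam : Fin n → ℝ) :
    SRes n T k lam = (T.val.map lam).esymm k :=
  (Finset.esymm_map_val lam T k).symm

lemma sres_zero (T : Finset (Fin n)) (lam : Fin n → ℝ) : SRes n T 0 lam = 1 := by
  simp [SRes]

lemma sres_eq_zero (T : Finset (Fin n)) (k : ℕ) (lam : Fin n → ℝ) (h : T.card < k) :
    SRes n T k lam = 0 := by
  rw [sres_eq_esymm]
  exact esymm_eq_zero _ _ (by simpa using h)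

lemma sres_erase (T : Finset (Fin n)) (i : Fin n) (hi : i ∈ T) (k : ℕ) (lam : Fin n → ℝ) :
    SRes n T (k+1) lam
      = SRes n (T.erase i) (k+1) lam + lam i * SRes n (T.erase i) k lam := by
  rw [sres_eq_esymm, sres_eq_esymm, sres_eq_esymm]
  have hv : T.val.map lam = lam i ::ₘ ((T.erase i).val.map lam) := by
    rw [Finset.erase_val]
    conv_lhs => rw [← Multiset.cons_erase (Finset.mem_def.mp hi)]
    rw [Multiset.map_cons]
  rw [hv, esymm_cons]

lemma sres_insert (T : Finset (Fin n)) (i : Fin n) (hi : i ∉ T) (k : ℕ) (lam : Fin n → ℝ) :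
    SRes n (insert i T) (k+1) lam
      = SRes n T (k+1) lam + lam i * SRes n T k lam := by
  have h := sres_erase (insert i T) i (Finset.mem_insert_self i T) k lam
  rwa [Finset.erase_insert hi] at h

lemma sres_one (T : Finset (Fin n)) (lam : Fin n → ℝ) :
    SRes n T 1 lam = ∑ i ∈ T, lam i := by
  rw [sres_eq_esymm, esymm_one', Finset.sum]

lemma sres_card (T : Finset (Fin n)) (lam : Fin n → ℝ) :
    SRes n T T.card lam = ∏ i ∈ T, lam i := by
  rw [sres_eq_esymm, show T.card = Multiset.card (T.val.map lam) by simp, esymm_card]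
  rfl

/-- double counting: (k+1) σ_{k+1}(T) = Σ_{i∈T} lam i σ_k(T\i) -/
lemma sres_star (T : Finset (Fin n)) (lam : Fin n → ℝ) :
    ∀ k : ℕ, ((k:ℝ)+1) * SRes n T (k+1) lam
      = ∑ i ∈ T, lam i * SRes n (T.erase i) k lam := by
  induction T using Finset.induction with
  | empty => intro k; simp [sres_eq_zero (∅ : Finset (Fin n)) (k+1) lam (by simp)]
  | @insert j U hj ih =>
    intro k
    rw [Finset.sum_insert hj, Finset.erase_insert hj, sres_insert U j hj k lam]
    have hrest : ∀ i ∈ U, (insert j U).erase i = insert j (U.erase i) := by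
      intro i hiU
      exact Finset.erase_insert_of_ne (by rintro rfl; exact hj hiU)
    rw [Finset.sum_congr rfl (fun i hiU => by rw [hrest i hiU])]
    cases k with
    | zero =>
      simp only [Nat.cast_zero, zero_add, one_mul, sres_zero, mul_one]
      rw [sres_one]
      ring
    | succ k' =>
      have expand : ∀ i ∈ U, lam i * SRes n (insert j (U.erase i)) (k'+1) lam
          = lam i * SRes n (U.erase i) (k'+1) lam
            + lam j * (lam i * SRes n (U.erase i) k' lam) := by
        intro i hiU
        rw [sres_insert (U.erase i) j (fun h => hj (Finset.mem_of_mem_erase h)) k' lam]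
        ring
      rw [Finset.sum_congr rfl expand, Finset.sum_add_distrib, ← Finset.mul_sum,
        ← ih (k'+1), ← ih k']
      push_cast
      ring

def GT (T : Finset (Fin n)) (m : ℕ) (lam : Fin n → ℝ) : Prop :=
  ∀ k, 1 ≤ k → k ≤ m → 0 < SRes n T k lam

lemma GT_mono {T : Finset (Fin n)} {m m' : ℕ} {lam : Fin n → ℝ} (h : GT T m lam)
    (hm : m' ≤ m) : GT T m' lam := fun k hk1 hk2 => h k hk1 (hk2.trans hm)


lemma choose_logconcave (N i : ℕ) (h : i + 2 ≤ N) :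
    ((N.choose i : ℕ) : ℝ) * ((N.choose (i+2) : ℕ) : ℝ) ≤ ((N.choose (i+1) : ℕ) : ℝ)^2 := by
  have e1n := Nat.choose_succ_right_eq N i
  have e2n := Nat.choose_succ_right_eq N (i+1)
  have e1 : ((N.choose (i+1) : ℕ):ℝ) * ((i:ℝ)+1) = ((N.choose i : ℕ):ℝ) * ((N:ℝ) - i) := by
    have := congrArg (fun x : ℕ => (x:ℝ)) e1n
    push_cast [Nat.cast_sub (by omega : i ≤ N)] at this
    linarith
  have e2 : ((N.choose (i+2) : ℕ):ℝ) * ((i:ℝ)+2) = ((N.choose (i+1) : ℕ):ℝ) * ((N:ℝ) - (i+1)) := by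
    have := congrArg (fun x : ℕ => (x:ℝ)) e2n
    push_cast [Nat.cast_sub (by omega : i + 1 ≤ N)] at this
    linarith
  set a : ℝ := ((N.choose i : ℕ) : ℝ)
  set b : ℝ := ((N.choose (i+1) : ℕ) : ℝ)
  set d : ℝ := ((N.choose (i+2) : ℕ) : ℝ)
  have hb : 0 ≤ b := Nat.cast_nonneg _
  have hNi : (0:ℝ) < (N:ℝ) - i := by
    have : (i:ℝ) + 2 ≤ (N:ℝ) := by exact_mod_cast h
    linarith
  have hi2 : (0:ℝ) < (i:ℝ) + 2 := by positivity
  have key : (a * d) * (((N:ℝ) - i) * ((i:ℝ)+2)) = (b * b) * (((i:ℝ)+1) * ((N:ℝ) - (i+1))) := by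
    calc (a * d) * (((N:ℝ) - i) * ((i:ℝ)+2)) = (a * ((N:ℝ) - i)) * (d * ((i:ℝ)+2)) := by ring
      _ = (b * ((i:ℝ)+1)) * (b * ((N:ℝ) - (i+1))) := by rw [← e1, ← e2]
      _ = (b * b) * (((i:ℝ)+1) * ((N:ℝ) - (i+1))) := by ring
  have hfac : ((i:ℝ)+1) * ((N:ℝ) - (i+1)) ≤ (((N:ℝ) - i) * ((i:ℝ)+2)) := by nlinarith
  have : (a * d) * (((N:ℝ) - i) * ((i:ℝ)+2)) ≤ (b * b) * (((N:ℝ) - i) * ((i:ℝ)+2)) := by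
    rw [key]
    exact mul_le_mul_of_nonneg_left hfac (by positivity)
  have := le_of_mul_le_mul_right this (by positivity)
  nlinarith [this]

lemma newton_weak (T : Finset (Fin n)) (lam : Fin n → ℝ) (i : ℕ) (h : i + 2 ≤ T.card)
    (h1 : 0 < SRes n T i lam) (h3 : 0 < SRes n T (i+2) lam) :
    SRes n T i lam * SRes n T (i+2) lam ≤ (SRes n T (i+1) lam)^2 := by
  have hcard : Multiset.card (T.val.map lam) = T.card := by simp
  have hnewton := newton T.card (T.val.map lam) hcard i h
  rw [← sres_eq_esymm, ← sres_eq_esymm, ← sres_eq_esymm] at hnewton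
  have hlog := choose_logconcave T.card i h
  have hchpos : (0:ℝ) < ((T.card.choose (i+1) : ℕ) : ℝ) := by
    exact_mod_cast Nat.choose_pos (by omega : i + 1 ≤ T.card)
  have step : SRes n T i lam * SRes n T (i+2) lam * ((T.card.choose (i+1) : ℕ) : ℝ)^2
      ≤ (SRes n T (i+1) lam)^2 * ((T.card.choose (i+1) : ℕ) : ℝ)^2 := by
    calc SRes n T i lam * SRes n T (i+2) lam * ((T.card.choose (i+1) : ℕ) : ℝ)^2
        ≤ (SRes n T (i+1) lam)^2 * (((T.card.choose i : ℕ) : ℝ) * ((T.card.choose (i+2) : ℕ) : ℝ)) := hnewton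
      _ ≤ (SRes n T (i+1) lam)^2 * ((T.card.choose (i+1) : ℕ) : ℝ)^2 :=
          mul_le_mul_of_nonneg_left hlog (sq_nonneg _)
  exact le_of_mul_le_mul_right step (by positivity)

/-- Key Lemma: removing any coordinate from a Γ_{m+1} vector keeps it in Γ_m. -/
lemma KL : ∀ (m : ℕ) (T : Finset (Fin n)) (lam : Fin n → ℝ), m + 1 ≤ T.card →
    GT T (m+1) lam → ∀ i ∈ T, GT (T.erase i) m lam := by
  intro m
  induction m with
  | zero => intro T lam _ _ i _ k hk1 hk2; omega
  | succ m' ihm =>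
    intro T lam hcard hGT i hi
    -- previous levels
    have hprev : GT (T.erase i) m' lam :=
      ihm T lam (by omega) (GT_mono hGT (by omega)) i hi
    -- main new level: k = m' + 1
    have hmain : 0 < SRes n (T.erase i) (m'+1) lam := by
      set c := lam i with hc
      have hsm2 : 0 < SRes n (T.erase i) m' lam := by
        rcases Nat.eq_zero_or_pos m' with rfl | hm'
        · rw [sres_zero]; norm_num
        · exact hprev m' hm' le_rfl
      have eq2 : SRes n T (m'+1) lam
          = SRes n (T.erase i) (m'+1) lam + c * SRes n (T.erase i) m' lam :=
        sres_erase T i hi m' lam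
      have hT1 : 0 < SRes n T (m'+1) lam := hGT (m'+1) (by omega) (by omega)
      rcases le_or_gt c 0 with hcneg | hcpos
      · nlinarith [mul_nonpos_of_nonpos_of_nonneg hcneg hsm2.le]
      · by_contra hcon
        push_neg at hcon
        have eq1 : SRes n T (m'+2) lam
            = SRes n (T.erase i) (m'+2) lam + c * SRes n (T.erase i) (m'+1) lam :=
          sres_erase T i hi (m'+1) lam
        have hT2 : 0 < SRes n T (m'+2) lam := hGT (m'+2) (by omega) le_rfl
        have hsm : 0 < SRes n (T.erase i) (m'+2) lam := by
          nlinarith [mul_nonneg hcpos.le (neg_nonneg.mpr hcon)]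
        rcases Nat.lt_or_ge ((T.erase i).card) (m'+2) with hsmall | hbig
        · rw [sres_eq_zero (T.erase i) (m'+2) lam hsmall] at hsm
          exact lt_irrefl 0 hsm
        · have hnw := newton_weak (T.erase i) lam m' hbig hsm2 hsm
          nlinarith [mul_pos hcpos hsm2, mul_pos (mul_pos hcpos hsm2) hsm]
    intro k hk1 hk2
    rcases Nat.lt_or_ge k (m'+1) with hlt | hge
    · exact hprev k hk1 (by omega)
    · have : k = m'+1 := by omega
      subst this
      exact hmain


lemma sres_pos_of_GT {T : Finset (Fin n)} {m : ℕ} {lam : Fin n → ℝ} (h : GT T m lam)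
    (k : ℕ) (hk : k ≤ m) : 0 < SRes n T k lam := by
  rcases Nat.eq_zero_or_pos k with rfl | hk1
  · rw [sres_zero]; norm_num
  · exact h k hk1 hk

lemma sres_one_add (T : Finset (Fin n)) (x y : Fin n → ℝ) :
    SRes n T 1 (x + y) = SRes n T 1 x + SRes n T 1 y := by
  rw [sres_one, sres_one, sres_one, ← Finset.sum_add_distrib]
  exact Finset.sum_congr rfl (fun i _ => rfl)

lemma engel (a b A B : ℝ) (hA : 0 < A) (hB : 0 < B) :
    (a+b)^2/(A+B) ≤ a^2/A + b^2/B := by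
  rw [div_add_div _ _ hA.ne' hB.ne', div_le_div_iff₀ (by positivity) (by positivity)]
  nlinarith [sq_nonneg (a*B - b*A), mul_pos hA hB]

lemma engel_step (a b : ℝ) {px py pz qx qy qz rx ry rz : ℝ}
    (hpx : 0 < px) (hpy : 0 < py) (hpz : 0 < pz)
    (hqx : 0 < qx) (hqy : 0 < qy) (hqz : 0 < qz)
    (ex : qx = rx + a * px) (ey : qy = ry + b * py) (ez : qz = rz + (a+b) * pz)
    (hspade : rx / px + ry / py ≤ rz / pz) :
    (a+b)^2 * (pz / qz) ≤ a^2 * (px/qx) + b^2 * (py/qy) := by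
  have hsum : qx/px + qy/py ≤ qz/pz := by
    have hx1 : qx/px = rx/px + a := by rw [ex, add_div, mul_div_cancel_right₀ a hpx.ne']
    have hy1 : qy/py = ry/py + b := by rw [ey, add_div, mul_div_cancel_right₀ b hpy.ne']
    have hz1 : qz/pz = rz/pz + (a+b) := by rw [ez, add_div, mul_div_cancel_right₀ _ hpz.ne']
    rw [hx1, hy1, hz1]
    linarith
  have hApos : 0 < qx/px := by positivity
  have hBpos : 0 < qy/py := by positivity
  have hZpos : 0 < qz/pz := by positivity
  have heng : (a+b)^2/(qx/px + qy/py) ≤ a^2/(qx/px) + b^2/(qy/py) :=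
    engel a b _ _ hApos hBpos
  have hmono : (a+b)^2/(qz/pz) ≤ (a+b)^2/(qx/px + qy/py) := by
    rw [div_le_div_iff₀ hZpos (by positivity)]
    exact mul_le_mul_of_nonneg_left hsum (sq_nonneg _)
  have h1 : (a+b)^2/(qz/pz) = (a+b)^2 * (pz/qz) := by
    rw [div_div_eq_mul_div, mul_div_assoc]
  have h2 : a^2/(qx/px) = a^2 * (px/qx) := by rw [div_div_eq_mul_div, mul_div_assoc]
  have h3 : b^2/(qy/py) = b^2 * (py/qy) := by rw [div_div_eq_mul_div, mul_div_assoc]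
  rw [← h1, ← h2, ← h3]
  linarith

/-- identity I2 : f_{m+2}(v) in terms of σ₁ minus weighted sum. -/
lemma I2 (T : Finset (Fin n)) (m : ℕ) (v : Fin n → ℝ) (hB : 0 < SRes n T (m+1) v) :
    SRes n T (m+2) v / SRes n T (m+1) v
      = (SRes n T 1 v
          - ∑ i ∈ T, (v i)^2 * (SRes n (T.erase i) m v / SRes n T (m+1) v)) / ((m:ℝ)+2) := by
  have hstar := sres_star T v (m+1)
  have hterm : ∀ i ∈ T, v i * SRes n (T.erase i) (m+1) v
      = v i * SRes n T (m+1) v - (v i)^2 * SRes n (T.erase i) m v := by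
    intro i hi
    rw [sres_erase T i hi m v]
    ring
  rw [Finset.sum_congr rfl hterm, Finset.sum_sub_distrib] at hstar
  have hsig1 : ∑ i ∈ T, v i * SRes n T (m+1) v = SRes n T 1 v * SRes n T (m+1) v := by
    rw [← Finset.sum_mul, sres_one]
  rw [hsig1] at hstar
  have hW : ∑ i ∈ T, (v i)^2 * (SRes n (T.erase i) m v / SRes n T (m+1) v)
      = (∑ i ∈ T, (v i)^2 * SRes n (T.erase i) m v) / SRes n T (m+1) v := by
    rw [Finset.sum_div]
    exact Finset.sum_congr rfl (fun i _ => by rw [mul_div_assoc])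
  rw [hW]
  have hm2 : ((m:ℝ)+1+1) = (m:ℝ)+2 := by ring
  push_cast at hstar
  rw [hm2] at hstar
  have e : m + 1 + 1 = m + 2 := by omega
  rw [e] at hstar
  rw [div_eq_div_iff hB.ne' (show ((m:ℝ)+2) ≠ 0 by positivity)]
  have hrhs : (SRes n T 1 v - (∑ i ∈ T, (v i)^2 * SRes n (T.erase i) m v) / SRes n T (m+1) v)
      * SRes n T (m+1) v
      = SRes n T 1 v * SRes n T (m+1) v - ∑ i ∈ T, (v i)^2 * SRes n (T.erase i) m v := by
    field_simp
  rw [hrhs]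
  linarith [hstar]

/-- Marcus–Lopes style superadditivity of σ_{m+1}/σ_m on the Gårding cone,
together with the closure of the cone under addition. -/
theorem ML : ∀ (m : ℕ) (T : Finset (Fin n)) (x y : Fin n → ℝ),
    m + 1 ≤ T.card → GT T (m+1) x → GT T (m+1) y →
    GT T (m+1) (x + y) ∧
    SRes n T (m+1) x / SRes n T m x + SRes n T (m+1) y / SRes n T m y
      ≤ SRes n T (m+1) (x+y) / SRes n T m (x+y) := by
  intro m
  induction m with
  | zero =>
    intro T x y hcard hx hy
    constructor
    · intro k hk1 hk2
      have : k = 1 := by omega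
      subst this
      rw [sres_one_add]
      exact add_pos (hx 1 le_rfl le_rfl) (hy 1 le_rfl le_rfl)
    · rw [sres_zero, sres_zero, sres_zero, div_one, div_one, div_one, sres_one_add]
  | succ m' ihm =>
    intro T x y hcard hx hy
    -- lower level cone membership for x+y
    have hlow := ihm T x y (by omega) (GT_mono hx (by omega)) (GT_mono hy (by omega))
    have hzlow : GT T (m'+1) (x+y) := hlow.1
    -- positivity
    have hqx : 0 < SRes n T (m'+1) x := hx (m'+1) (by omega) (by omega)
    have hqy : 0 < SRes n T (m'+1) y := hy (m'+1) (by omega) (by omega)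
    have hqz : 0 < SRes n T (m'+1) (x+y) := hzlow (m'+1) (by omega) (by omega)
    -- the f-inequality
    have hkey : SRes n T (m'+2) x / SRes n T (m'+1) x + SRes n T (m'+2) y / SRes n T (m'+1) y
        ≤ SRes n T (m'+2) (x+y) / SRes n T (m'+1) (x+y) := by
      rw [I2 T m' x hqx, I2 T m' y hqy, I2 T m' (x+y) hqz]
      rw [← add_div, div_le_div_iff₀ (by positivity) (by positivity)]
      have hterm : ∀ i ∈ T,
          ((x+y) i)^2 * (SRes n (T.erase i) m' (x+y) / SRes n T (m'+1) (x+y))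
          ≤ (x i)^2 * (SRes n (T.erase i) m' x / SRes n T (m'+1) x)
            + (y i)^2 * (SRes n (T.erase i) m' y / SRes n T (m'+1) y) := by
        intro i hi
        have hcarde : (T.erase i).card = T.card - 1 := Finset.card_erase_of_mem hi
        have hex : GT (T.erase i) (m'+1) x := KL (m'+1) T x (by omega) hx i hi
        have hey : GT (T.erase i) (m'+1) y := KL (m'+1) T y (by omega) hy i hi
        have hIH := ihm (T.erase i) x y (by omega) hex hey
        have hez : GT (T.erase i) (m'+1) (x+y) := hIH.1
        have hpx : 0 < SRes n (T.erase i) m' x := sres_pos_of_GT hex m' (by omega)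
        have hpy : 0 < SRes n (T.erase i) m' y := sres_pos_of_GT hey m' (by omega)
        have hpz : 0 < SRes n (T.erase i) m' (x+y) := sres_pos_of_GT hez m' (by omega)
        have hax : SRes n T (m'+1) x
            = SRes n (T.erase i) (m'+1) x + x i * SRes n (T.erase i) m' x :=
          sres_erase T i hi m' x
        have hay : SRes n T (m'+1) y
            = SRes n (T.erase i) (m'+1) y + y i * SRes n (T.erase i) m' y :=
          sres_erase T i hi m' y
        have haz : SRes n T (m'+1) (x+y)
            = SRes n (T.erase i) (m'+1) (x+y) + ((x i) + (y i)) * SRes n (T.erase i) m' (x+y) :=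
          sres_erase T i hi m' (x+y)
        have hzi : (x+y) i = x i + y i := rfl
        rw [hzi]
        exact engel_step (x i) (y i) hpx hpy hpz hqx hqy hqz hax hay haz hIH.2
      have hsum := Finset.sum_le_sum hterm
      have hs1 : SRes n T 1 (x+y) = SRes n T 1 x + SRes n T 1 y := sres_one_add T x y
      rw [Finset.sum_add_distrib] at hsum
      have hm2pos : (0:ℝ) < (m':ℝ)+2 := by positivity
      nlinarith [hsum, hs1, hm2pos]
    constructor
    · intro k hk1 hk2
      rcases Nat.lt_or_ge k (m'+2) with hlt | hge
      · exact hzlow k hk1 (by omega)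
      · have : k = m'+2 := by omega
        subst this
        have hfx : 0 < SRes n T (m'+2) x / SRes n T (m'+1) x :=
          div_pos (hx (m'+2) (by omega) le_rfl) hqx
        have hfy : 0 < SRes n T (m'+2) y / SRes n T (m'+1) y :=
          div_pos (hy (m'+2) (by omega) le_rfl) hqy
        have hfz : 0 < SRes n T (m'+2) (x+y) / SRes n T (m'+1) (x+y) := by linarith
        have := (div_pos_iff.mp hfz)
        rcases this with ⟨h1, _⟩ | ⟨_, h2⟩
        · exact h1
        · linarith
    · exact hkey


lemma telescope (m : ℕ) (x y : Fin n → ℝ) (hmn : m ≤ n)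
    (hx : GT (Finset.univ : Finset (Fin n)) m x) (hy : GT (Finset.univ : Finset (Fin n)) m y) :
    ∀ k, k ≤ m → SRes n Finset.univ k x ≤ SRes n Finset.univ k (x+y) := by
  have hcardu : (Finset.univ : Finset (Fin n)).card = n := by
    rw [Finset.card_univ, Fintype.card_fin]
  intro k
  induction k with
  | zero => intro _; rw [sres_zero, sres_zero]
  | succ k ihk =>
    intro hk
    have hxk : GT (Finset.univ : Finset (Fin n)) (k+1) x := GT_mono hx hk
    have hyk : GT (Finset.univ : Finset (Fin n)) (k+1) y := GT_mono hy hk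
    have hML := ML k Finset.univ x y (by omega) hxk hyk
    have hzk : GT (Finset.univ : Finset (Fin n)) (k+1) (x+y) := hML.1
    have hpxk : 0 < SRes n Finset.univ k x := sres_pos_of_GT hxk k (by omega)
    have hpzk : 0 < SRes n Finset.univ k (x+y) := sres_pos_of_GT hzk k (by omega)
    have hfy : 0 < SRes n Finset.univ (k+1) y / SRes n Finset.univ k y :=
      div_pos (hyk (k+1) (by omega) le_rfl) (sres_pos_of_GT hyk k (by omega))
    have hfx : 0 < SRes n Finset.univ (k+1) x / SRes n Finset.univ k x :=
      div_pos (hxk (k+1) (by omega) le_rfl) hpxk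
    have hffz : SRes n Finset.univ (k+1) x / SRes n Finset.univ k x
        ≤ SRes n Finset.univ (k+1) (x+y) / SRes n Finset.univ k (x+y) := by
      linarith [hML.2]
    have hx1 : SRes n Finset.univ (k+1) x
        = (SRes n Finset.univ (k+1) x / SRes n Finset.univ k x) * SRes n Finset.univ k x := by
      rw [div_mul_cancel₀ _ hpxk.ne']
    have hz1 : SRes n Finset.univ (k+1) (x+y)
        = (SRes n Finset.univ (k+1) (x+y) / SRes n Finset.univ k (x+y))
            * SRes n Finset.univ k (x+y) := by
      rw [div_mul_cancel₀ _ hpzk.ne']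
    rw [hx1, hz1]
    exact mul_le_mul hffz (ihk (by omega)) hpxk.le (le_trans hfx.le hffz)

end MyES

theorem stmt10 (n m : ℕ) (hm : 1 ≤ m) (hmn : m ≤ n) (lam mu : Fin n → ℝ)
    (hlam : lam ∈ GammaCone n m) (hmu : mu ∈ GammaCone n m) :
    S n m lam ≤ S n m (lam + mu) := by
  have hlam' : MyES.GT (Finset.univ : Finset (Fin n)) m lam := fun k h1 h2 => hlam k h1 h2
  have hmu' : MyES.GT (Finset.univ : Finset (Fin n)) m mu := fun k h1 h2 => hmu k h1 h2
  exact MyES.telescope m lam mu hmn hlam' hmu' m le_rfl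
end
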